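/- arXiv:2104.13306 — 9 statements merged into one kernel-verified Lean document; each statement's English description precedes it below -/
import Mathlib

section
/- For every point x in the complement of K, the metric projection satisfies ⟪p_K(x) − x, p_K(x)⟫ < 0. -/
open scoped RealInnerProductSpace

/-- For every point `x` in the complement of `K`, the metric projection satisfies
`⟪p_K(x) − x, p_K(x)⟫ < 0`. -/
theorem stmt_0 {n : ℕ} (hn : 0 < n)
    (K : Set (EuclideanSpace ℝ (Fin n)))
    (hKcomp : IsCompact K) (hKconv : Convex ℝ K)
    (h0 : (0 : EuclideanSpace ℝ (Fin n)) ∈ interior K)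
    (p : EuclideanSpace ℝ (Fin n) → EuclideanSpace ℝ (Fin n))
    (hpmem : ∀ x, p x ∈ K)
    (hpmin : ∀ x, ∀ y ∈ K, dist x (p x) ≤ dist x y)
    (x : EuclideanSpace ℝ (Fin n)) (hx : x ∉ K) :
    ⟪p x - x, p x⟫ < 0 := by
  have hne : x ≠ p x := fun h => hx (h ▸ hpmem x)
  have hnorm : (0:ℝ) < ‖x - p x‖ := by
    rw [norm_pos_iff, sub_ne_zero]; exact hne
  -- the infimum characterization
  have hKne : K.Nonempty := ⟨p x, hpmem x⟩
  haveI := hKne.to_subtype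
  have hinf : ‖x - p x‖ = ⨅ w : K, ‖x - w‖ := by
    apply le_antisymm
    · apply le_ciInf
      intro w
      simpa [dist_eq_norm] using hpmin x w w.2
    · exact ciInf_le ⟨0, fun r ⟨w, hw⟩ => hw ▸ norm_nonneg _⟩ (⟨p x, hpmem x⟩ : K)
  have hvar : ∀ w ∈ K, ⟪x - p x, w - p x⟫ ≤ 0 :=
    (norm_eq_iInf_iff_real_inner_le_zero hKconv (hpmem x)).mp hinf
  -- choose a small positive multiple of x - p x inside K
  obtain ⟨ε, hε, hball⟩ := Metric.isOpen_iff.mp isOpen_interior 0 h0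
  set t : ℝ := ε / (2 * ‖x - p x‖) with ht
  have htpos : 0 < t := div_pos hε (by positivity)
  have hw : t • (x - p x) ∈ K := by
    apply interior_subset
    apply hball
    simp only [Metric.mem_ball, dist_zero_right, norm_smul, Real.norm_eq_abs,
      abs_of_pos htpos, ht]
    rw [abs_of_pos (div_pos hε (by positivity)), div_mul_eq_mul_div, div_lt_iff₀ (by positivity)]
    nlinarith
  have h1 := hvar _ hw
  rw [inner_sub_right, real_inner_smul_right, real_inner_self_eq_norm_sq] at h1
  have h2 : ⟪p x - x, p x⟫ = - ⟪x - p x, p x⟫ := by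
    rw [← inner_neg_left]; congr 1; abel
  rw [h2]
  nlinarith [mul_pos htpos (pow_pos hnorm 2)]
end

section
/- For every point x in the complement of K, the vector u_K(x) = (1/⟪p_K(x) − x, p_K(x)⟫) • (x − p_K(x)) lies in the frontier of the polar dual K°, and ⟪u_K(x), p_K(x)⟫ = −1. -/
open scoped RealInnerProductSpace

/-- For every `x ∉ K`, the vector `u_K(x) = (1/⟪p_K(x) − x, p_K(x)⟫) • (x − p_K(x))`
lies in the frontier of the polar dual `K°`, and `⟪u_K(x), p_K(x)⟫ = −1`. -/
theorem stmt_1 {n : ℕ} (hn : 0 < n)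
    (K : Set (EuclideanSpace ℝ (Fin n)))
    (hKcomp : IsCompact K) (hKconv : Convex ℝ K)
    (h0 : (0 : EuclideanSpace ℝ (Fin n)) ∈ interior K)
    (p : EuclideanSpace ℝ (Fin n) → EuclideanSpace ℝ (Fin n))
    (hpmem : ∀ x, p x ∈ K)
    (hpmin : ∀ x, ∀ y ∈ K, dist x (p x) ≤ dist x y)
    (x : EuclideanSpace ℝ (Fin n)) (hx : x ∉ K) :
    (1 / ⟪p x - x, p x⟫) • (x - p x) ∈
        frontier {ℓ : EuclideanSpace ℝ (Fin n) | ∀ y ∈ K, -1 ≤ ⟪ℓ, y⟫} ∧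
      ⟪(1 / ⟪p x - x, p x⟫) • (x - p x), p x⟫ = -1 := by
  classical
  have hpK : p x ∈ K := hpmem x
  have hvne : x - p x ≠ 0 := sub_ne_zero.2 (fun h => hx (h ▸ hpK))
  -- obtuse angle criterion
  have hproj : ∀ w ∈ K, ⟪x - p x, w - p x⟫ ≤ 0 := by
    have : Nonempty K := ⟨⟨p x, hpK⟩⟩
    have h1 : ‖x - p x‖ = ⨅ w : K, ‖x - w‖ := by
      apply le_antisymm
      · exact le_ciInf fun w => by simpa [dist_eq_norm] using hpmin x w w.2
      · exact ciInf_le ⟨0, by rintro r ⟨w, rfl⟩; positivity⟩ (⟨p x, hpK⟩ : K)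
    exact (norm_eq_iInf_iff_real_inner_le_zero hKconv hpK).mp h1
  -- positivity of ⟪x - p x, p x⟫
  obtain ⟨ε, hε, hball⟩ := Metric.mem_nhds_iff.mp (mem_interior_iff_mem_nhds.mp h0)
  have hballK : Metric.ball (0 : EuclideanSpace ℝ (Fin n)) ε ⊆ K := hball
  have hvpos : 0 < ‖x - p x‖ := norm_pos_iff.2 hvne
  have hypos : 0 < ⟪x - p x, p x⟫ := by
    set y : EuclideanSpace ℝ (Fin n) := (ε / (2 * ‖x - p x‖)) • (x - p x) with hy
    have hyK : y ∈ K := by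
      apply hballK
      rw [Metric.mem_ball, dist_zero_right, hy, norm_smul]
      rw [Real.norm_eq_abs, abs_of_pos (by positivity)]
      rw [div_mul_eq_mul_div, div_lt_iff₀ (by positivity)]
      nlinarith
    have := hproj y hyK
    rw [inner_sub_right, hy, real_inner_smul_right, real_inner_self_eq_norm_sq] at this
    nlinarith [sq_nonneg ‖x - p x‖, div_pos hε (by positivity : (0:ℝ) < 2 * ‖x - p x‖),
      mul_pos (div_pos hε (by positivity : (0:ℝ) < 2 * ‖x - p x‖)) (mul_pos hvpos hvpos)]
  have hc : ⟪p x - x, p x⟫ = -⟪x - p x, p x⟫ := by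
    rw [← inner_neg_left, neg_sub]
  have hcneg : ⟪p x - x, p x⟫ < 0 := by rw [hc]; linarith
  have hcne : ⟪p x - x, p x⟫ ≠ 0 := ne_of_lt hcneg
  set c : ℝ := ⟪p x - x, p x⟫ with hcdef
  set u : EuclideanSpace ℝ (Fin n) := (1 / c) • (x - p x) with hu
  have hinner : ⟪u, p x⟫ = -1 := by
    rw [hu, real_inner_smul_left, hc, one_div, inv_neg, neg_mul,
      inv_mul_cancel₀ (ne_of_gt hypos)]
  have hmem : u ∈ {ℓ : EuclideanSpace ℝ (Fin n) | ∀ y ∈ K, -1 ≤ ⟪ℓ, y⟫} := by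
    intro y hy
    have h1 := hproj y hy
    rw [inner_sub_right] at h1
    have h2 : ⟪x - p x, y⟫ ≤ -c := by rw [hc]; linarith
    rw [hu, real_inner_smul_left]
    rw [one_div, ← div_eq_inv_mul, le_div_iff_of_neg hcneg]
    linarith
  constructor
  · rw [frontier]
    refine ⟨subset_closure hmem, ?_⟩
    intro hint
    obtain ⟨δ, hδ, hballu⟩ := Metric.isOpen_iff.mp isOpen_interior u hint
    have hune : u ≠ 0 := by
      intro h
      rw [h, inner_zero_left] at hinner
      norm_num at hinner
    have hupos : 0 < ‖u‖ := norm_pos_iff.2 hune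
    set t : ℝ := δ / (2 * ‖u‖) with ht
    have htpos : 0 < t := by positivity
    have hmem2 : (1 + t) • u ∈ Metric.ball u δ := by
      rw [Metric.mem_ball, dist_eq_norm]
      have : (1 + t) • u - u = t • u := by
        rw [add_smul, one_smul]; abel
      rw [this, norm_smul, Real.norm_eq_abs, abs_of_pos htpos, ht]
      rw [div_mul_eq_mul_div, div_lt_iff₀ (by positivity)]
      nlinarith
    have hmem3 := interior_subset (hballu hmem2)
    have := hmem3 (p x) hpK
    rw [real_inner_smul_left, hinner] at this
    nlinarith
  · exact hinner
end

section
/- Let K₁ = K + closedBall(0,1) be the Minkowski sum of K and the closed unit ball. The map φ : frontier K₁ → N(K) given by φ(x) = (p_K(x), u_K(x)) is a homeomorphism onto the normal cycle N(K) (with the subspace topology of ℝ^n × ℝ^n), with continuous inverse ψ : N(K) → frontier K₁ given by ψ(x, ℓ) = x − (1/‖ℓ‖) • ℓ. In particular, N(K) is compact. -/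
open scoped RealInnerProductSpace Pointwise

set_option maxHeartbeats 1000000 in
/-- The map `φ : frontier K₁ → N(K)`, `x ↦ (p_K(x), u_K(x))`, is a homeomorphism onto the
normal cycle `N(K)` with continuous inverse `ψ(x, ℓ) = x − (1/‖ℓ‖) • ℓ`. In particular,
`N(K)` is compact. -/
theorem stmt_4 {n : ℕ} (hn : 0 < n)
    (K : Set (EuclideanSpace ℝ (Fin n)))
    (hKcomp : IsCompact K) (hKconv : Convex ℝ K)
    (h0 : (0 : EuclideanSpace ℝ (Fin n)) ∈ interior K)
    (p : EuclideanSpace ℝ (Fin n) → EuclideanSpace ℝ (Fin n))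
    (hpmem : ∀ x, p x ∈ K)
    (hpmin : ∀ x, ∀ y ∈ K, dist x (p x) ≤ dist x y)
    (K₁ : Set (EuclideanSpace ℝ (Fin n)))
    (hK₁ : K₁ = K + Metric.closedBall (0 : EuclideanSpace ℝ (Fin n)) 1)
    (NK : Set (EuclideanSpace ℝ (Fin n) × EuclideanSpace ℝ (Fin n)))
    (hNK : NK = {z | z.1 ∈ frontier K ∧
        z.2 ∈ frontier {ℓ : EuclideanSpace ℝ (Fin n) | ∀ y ∈ K, -1 ≤ ⟪ℓ, y⟫} ∧
        ∀ x' ∈ K, ⟪z.2, z.1 - x'⟫ ≤ 0})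
    (φ : EuclideanSpace ℝ (Fin n) → EuclideanSpace ℝ (Fin n) × EuclideanSpace ℝ (Fin n))
    (hφ : φ = fun x => (p x, (1 / ⟪p x - x, p x⟫) • (x - p x)))
    (ψ : EuclideanSpace ℝ (Fin n) × EuclideanSpace ℝ (Fin n) → EuclideanSpace ℝ (Fin n))
    (hψ : ψ = fun z => z.1 - (1 / ‖z.2‖) • z.2) :
    (∀ x ∈ frontier K₁, φ x ∈ NK) ∧ ContinuousOn φ (frontier K₁) ∧
      (∀ z ∈ NK, ψ z ∈ frontier K₁) ∧ ContinuousOn ψ NK ∧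
      (∀ x ∈ frontier K₁, ψ (φ x) = x) ∧ (∀ z ∈ NK, φ (ψ z) = z) ∧
      IsCompact NK := by
  have hK0 : (0 : EuclideanSpace ℝ (Fin n)) ∈ K := interior_subset h0
  have hKne : K.Nonempty := ⟨0, hK0⟩
  have hKcl : IsClosed K := hKcomp.isClosed
  have _ : Nonempty ↑K := hKne.to_subtype
  -- the variational inequality for the projection
  have hvar : ∀ x : EuclideanSpace ℝ (Fin n), ∀ y ∈ K, ⟪x - p x, y - p x⟫ ≤ 0 := by
    intro x
    rw [← norm_eq_iInf_iff_real_inner_le_zero hKconv (hpmem x)]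
    apply le_antisymm
    · apply le_ciInf
      intro w
      simpa [dist_eq_norm] using hpmin x w w.2
    · exact ciInf_le (f := fun w : K => ‖x - (w : EuclideanSpace ℝ (Fin n))‖)
        ⟨0, by rintro r ⟨w, rfl⟩; exact norm_nonneg _⟩ ⟨p x, hpmem x⟩
  -- p is 1-Lipschitz
  have hplip : LipschitzWith 1 p := by
    rw [lipschitzWith_iff_dist_le_mul]
    intro x y
    rcases eq_or_ne (p x) (p y) with h | h
    · simp [h, dist_nonneg]
    · have h1 : ⟪x - p x, p y - p x⟫ ≤ 0 := hvar x (p y) (hpmem y)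
      have h2 : ⟪y - p y, p x - p y⟫ ≤ 0 := hvar y (p x) (hpmem x)
      have e1 : ⟪x - y, p x - p y⟫
          = ⟪x - p x, p x - p y⟫ - ⟪y - p y, p x - p y⟫ + ⟪p x - p y, p x - p y⟫ := by
        rw [← inner_sub_left, ← inner_add_left]; congr 1; abel
      have e2 : ⟪x - p x, p x - p y⟫ = -⟪x - p x, p y - p x⟫ := by
        rw [← inner_neg_right, neg_sub]
      have e4 : ⟪p x - p y, p x - p y⟫ = ‖p x - p y‖ ^ 2 := real_inner_self_eq_norm_sq _
      have h4 : ⟪x - y, p x - p y⟫ ≤ ‖x - y‖ * ‖p x - p y‖ := real_inner_le_norm _ _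
      have h5 : 0 < ‖p x - p y‖ := norm_sub_pos_iff.mpr h
      rw [dist_eq_norm, dist_eq_norm, NNReal.coe_one, one_mul]
      nlinarith
  have hpc : Continuous p := hplip.continuous
  -- membership in K₁
  have hmemK₁ : ∀ x, x ∈ K₁ ↔ ‖x - p x‖ ≤ 1 := by
    intro x
    rw [hK₁, Set.mem_add]
    constructor
    · rintro ⟨k, hk, b, hb, rfl⟩
      have h1 : dist (k + b) (p (k + b)) ≤ dist (k + b) k := hpmin _ k hk
      have h2 : ‖b‖ ≤ 1 := by simpa using Metric.mem_closedBall.mp hb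
      rw [dist_eq_norm, dist_eq_norm] at h1
      calc ‖k + b - p (k + b)‖ ≤ ‖k + b - k‖ := h1
        _ = ‖b‖ := by rw [add_sub_cancel_left]
        _ ≤ 1 := h2
    · intro h
      exact ⟨p x, hpmem x, x - p x,
        by simpa [Metric.mem_closedBall, dist_zero_right] using h, by abel⟩
  have hK₁comp : IsCompact K₁ := by
    rw [hK₁]; exact hKcomp.add (isCompact_closedBall 0 1)
  have hK₁cl : IsClosed K₁ := hK₁comp.isClosed
  -- points of frontier K₁ are at distance exactly 1
  have hfx : ∀ x ∈ frontier K₁, ‖x - p x‖ = 1 := by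
    intro x hx
    rw [hK₁cl.frontier_eq] at hx
    obtain ⟨hxK₁, hnint⟩ := hx
    have hle := (hmemK₁ x).mp hxK₁
    by_contra h
    have hlt : ‖x - p x‖ < 1 := lt_of_le_of_ne hle h
    apply hnint
    rw [mem_interior]
    refine ⟨Metric.ball x (1 - ‖x - p x‖), fun y hy => ?_, Metric.isOpen_ball,
      Metric.mem_ball_self (by linarith)⟩
    rw [hmemK₁]
    have h1 : ‖y - p y‖ ≤ ‖y - p x‖ := by
      simpa [dist_eq_norm] using hpmin y (p x) (hpmem x)
    have h2 : ‖y - p x‖ ≤ ‖y - x‖ + ‖x - p x‖ := by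
      calc ‖y - p x‖ = ‖(y - x) + (x - p x)‖ := by congr 1; abel
        _ ≤ ‖y - x‖ + ‖x - p x‖ := norm_add_le _ _
    have h3 : ‖y - x‖ < 1 - ‖x - p x‖ := by
      rw [Metric.mem_ball, dist_eq_norm] at hy; exact hy
    linarith
  -- positivity of ⟪x - p x, p x⟫ on frontier K₁
  have hax : ∀ x ∈ frontier K₁, 0 < ⟪x - p x, p x⟫ := by
    intro x hx
    obtain ⟨ε, hε, hball⟩ := Metric.mem_nhds_iff.mp (mem_interior_iff_mem_nhds.mp h0)
    have hy : (ε/2) • (x - p x) ∈ K := by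
      apply hball
      rw [mem_ball_zero_iff, norm_smul, hfx x hx, mul_one, Real.norm_eq_abs,
        abs_of_pos (by linarith)]
      linarith
    have hv := hvar x _ hy
    rw [inner_sub_right, real_inner_smul_right] at hv
    have hself : ⟪x - p x, x - p x⟫ = 1 := by
      rw [real_inner_self_eq_norm_sq, hfx x hx, one_pow]
    nlinarith
  have hce : ∀ x : EuclideanSpace ℝ (Fin n), ⟪p x - x, p x⟫ = -⟪x - p x, p x⟫ := by
    intro x; rw [← inner_neg_left, neg_sub]
  have hc : ∀ x ∈ frontier K₁, ⟪p x - x, p x⟫ < 0 := by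
    intro x hx; rw [hce]; linarith [hax x hx]
  -- the polar set is closed
  have hPcl : IsClosed {ℓ : EuclideanSpace ℝ (Fin n) | ∀ y ∈ K, -1 ≤ ⟪ℓ, y⟫} := by
    have h : {ℓ : EuclideanSpace ℝ (Fin n) | ∀ y ∈ K, -1 ≤ ⟪ℓ, y⟫}
        = ⋂ y ∈ K, {ℓ : EuclideanSpace ℝ (Fin n) | -1 ≤ ⟪ℓ, y⟫} := by
      ext ℓ; simp
    rw [h]
    exact isClosed_biInter fun y hy =>
      isClosed_le continuous_const (Continuous.inner continuous_id continuous_const)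
  -- Claim A: in polar with value -1 attained ⟹ in frontier of polar
  have clA : ∀ ℓ : EuclideanSpace ℝ (Fin n), (∀ y ∈ K, -1 ≤ ⟪ℓ, y⟫) →
      (∃ y₀ ∈ K, ⟪ℓ, y₀⟫ = -1) →
      ℓ ∈ frontier {ℓ : EuclideanSpace ℝ (Fin n) | ∀ y ∈ K, -1 ≤ ⟪ℓ, y⟫} := by
    rintro ℓ hℓ ⟨y₀, hy₀K, hy₀⟩
    rw [hPcl.frontier_eq]
    refine ⟨hℓ, fun hint => ?_⟩
    obtain ⟨ε, hε, hball⟩ := Metric.mem_nhds_iff.mp (mem_interior_iff_mem_nhds.mp hint)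
    have hy₀0 : y₀ ≠ 0 := by
      rintro rfl; rw [inner_zero_right] at hy₀; norm_num at hy₀
    have hn0 : 0 < ‖y₀‖ := norm_pos_iff.mpr hy₀0
    set t := ε / (2 * ‖y₀‖) with ht_def
    have ht : 0 < t := by positivity
    have hmem : ℓ - t • y₀ ∈ Metric.ball ℓ ε := by
      rw [Metric.mem_ball, dist_eq_norm]
      have : ℓ - t • y₀ - ℓ = -(t • y₀) := by abel
      rw [this, norm_neg, norm_smul, Real.norm_eq_abs, abs_of_pos ht, ht_def]
      rw [div_mul_eq_mul_div, mul_comm]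
      rw [div_lt_iff₀ (by positivity)]
      nlinarith
    have hge := hball hmem y₀ hy₀K
    rw [inner_sub_left, real_inner_smul_left, hy₀, real_inner_self_eq_norm_sq] at hge
    nlinarith [mul_pos ht (pow_pos hn0 2)]
  -- Claim B: frontier of polar ⟹ in polar and value -1 attained
  have clB : ∀ ℓ ∈ frontier {ℓ : EuclideanSpace ℝ (Fin n) | ∀ y ∈ K, -1 ≤ ⟪ℓ, y⟫},
      (∀ y ∈ K, -1 ≤ ⟪ℓ, y⟫) ∧ ∃ y₀ ∈ K, ⟪ℓ, y₀⟫ = -1 := by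
    intro ℓ hℓ
    rw [hPcl.frontier_eq] at hℓ
    obtain ⟨hℓP, hnint⟩ := hℓ
    refine ⟨hℓP, ?_⟩
    have hcont : ContinuousOn (fun y : EuclideanSpace ℝ (Fin n) => ⟪ℓ, y⟫) K :=
      (Continuous.inner continuous_const continuous_id).continuousOn
    obtain ⟨y₀, hy₀K, hmin⟩ := hKcomp.exists_isMinOn hKne hcont
    refine ⟨y₀, hy₀K, ?_⟩
    rcases lt_or_ge (-1 : ℝ) ⟪ℓ, y₀⟫ with hgt | hle
    · exfalso
      apply hnint
      obtain ⟨R, hR⟩ := hKcomp.isBounded.subset_closedBall 0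
      set R' := max R 1 with hR'def
      have hR' : (0:ℝ) < R' := lt_of_lt_of_le one_pos (le_max_right _ _)
      rw [mem_interior]
      refine ⟨Metric.ball ℓ ((⟪ℓ, y₀⟫ + 1) / R'), fun ℓ' hℓ' => ?_, Metric.isOpen_ball,
        Metric.mem_ball_self (div_pos (by linarith) hR')⟩
      simp only [Set.mem_setOf_eq]
      intro y hy
      have hyR : ‖y‖ ≤ R' := by
        have := Metric.mem_closedBall.mp (hR hy)
        rw [dist_zero_right] at this
        exact le_trans this (le_max_left _ _)
      have h1 : ⟪ℓ', y⟫ = ⟪ℓ, y⟫ + ⟪ℓ' - ℓ, y⟫ := by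
        rw [← inner_add_left]; congr 1; abel
      have h2 : |⟪ℓ' - ℓ, y⟫| ≤ ‖ℓ' - ℓ‖ * ‖y‖ := abs_real_inner_le_norm _ _
      have h3 : ‖ℓ' - ℓ‖ < (⟪ℓ, y₀⟫ + 1) / R' := by
        rw [Metric.mem_ball, dist_eq_norm] at hℓ'; exact hℓ'
      have h4 : ⟪ℓ, y₀⟫ ≤ ⟪ℓ, y⟫ := (isMinOn_iff.mp hmin) y hy
      have h5 : ‖ℓ' - ℓ‖ * ‖y‖ ≤ ‖ℓ' - ℓ‖ * R' :=
        mul_le_mul_of_nonneg_left hyR (norm_nonneg _)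
      have h6 : ‖ℓ' - ℓ‖ * R' < ⟪ℓ, y₀⟫ + 1 := (lt_div_iff₀ hR').mp h3
      have h7 := neg_abs_le ⟪ℓ' - ℓ, y⟫
      linarith
    · exact le_antisymm hle (hℓP y₀ hy₀K)
  -- facts about points of NK
  have hNKfacts : ∀ z ∈ NK, z.1 ∈ K ∧ ⟪z.2, z.1⟫ = -1 ∧ z.2 ≠ 0 ∧
      (∀ x' ∈ K, ⟪z.2, z.1 - x'⟫ ≤ 0) := by
    intro z hz
    rw [hNK] at hz
    obtain ⟨hz1, hz2, hz3⟩ := hz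
    have hz1K : z.1 ∈ K := by
      rw [hKcl.frontier_eq] at hz1; exact hz1.1
    obtain ⟨hP, y₀, hy₀K, hy₀⟩ := clB z.2 hz2
    have hx : ⟪z.2, z.1⟫ = -1 := by
      have h1 : -1 ≤ ⟪z.2, z.1⟫ := hP z.1 hz1K
      have h2 : ⟪z.2, z.1 - y₀⟫ ≤ 0 := hz3 y₀ hy₀K
      rw [inner_sub_right, hy₀] at h2
      linarith
    have hz20 : z.2 ≠ 0 := by
      intro h; rw [h, inner_zero_left] at hx; norm_num at hx
    exact ⟨hz1K, hx, hz20, hz3⟩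
  have hunit : ∀ v : EuclideanSpace ℝ (Fin n), v ≠ 0 → ‖(1/‖v‖) • v‖ = 1 := by
    intro v hv
    have h : 0 < ‖v‖ := norm_pos_iff.mpr hv
    rw [norm_smul, Real.norm_eq_abs, abs_of_pos (by positivity), one_div, inv_mul_cancel₀ h.ne']
  -- the key quadratic estimate
  have hkey : ∀ z ∈ NK, ∀ s : ℝ, 0 ≤ s → ∀ x' ∈ K,
      ‖z.1 - x'‖ ^ 2 + s ^ 2 ≤ ‖z.1 - s • ((1/‖z.2‖) • z.2) - x'‖ ^ 2 := by
    intro z hz s hs x' hx'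
    obtain ⟨hz1K, hinner, hz20, hsupp⟩ := hNKfacts z hz
    have hun : ‖(1/‖z.2‖) • z.2‖ = 1 := hunit z.2 hz20
    have h1 : z.1 - s • ((1/‖z.2‖) • z.2) - x' = (z.1 - x') - s • ((1/‖z.2‖) • z.2) := by abel
    have hexp := norm_sub_sq_real (z.1 - x') (s • ((1/‖z.2‖) • z.2))
    rw [h1, hexp]
    have h2 : ⟪z.1 - x', s • ((1/‖z.2‖) • z.2)⟫ ≤ 0 := by
      rw [real_inner_smul_right, real_inner_smul_right]
      have h3 : ⟪z.1 - x', z.2⟫ ≤ 0 := by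
        rw [real_inner_comm]; exact hsupp x' hx'
      have h4 : (0:ℝ) ≤ 1/‖z.2‖ := by positivity
      have := mul_nonpos_iff.mpr (Or.inl ⟨h4, h3⟩)
      exact mul_nonpos_iff.mpr (Or.inl ⟨hs, this⟩)
    have h3 : ‖s • ((1/‖z.2‖) • z.2)‖ ^ 2 = s ^ 2 := by
      rw [norm_smul, hun, mul_one, Real.norm_eq_abs, sq_abs]
    rw [h3]
    linarith
  -- Goal 1 : φ maps frontier K₁ into NK
  have G1 : ∀ x ∈ frontier K₁, φ x ∈ NK := by
    intro x hx
    have h1 := hfx x hx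
    have ha := hax x hx
    have hc' := hc x hx
    simp only [hφ, hNK, Set.mem_setOf_eq]
    refine ⟨?_, ?_, ?_⟩
    · -- p x ∈ frontier K
      rw [hKcl.frontier_eq]
      refine ⟨hpmem x, fun hint => ?_⟩
      obtain ⟨ε, hε, hball⟩ := Metric.mem_nhds_iff.mp (mem_interior_iff_mem_nhds.mp hint)
      set t := min ε 1 / 2 with ht_def
      have ht0 : 0 < t := by positivity
      have ht1 : t < 1 := by
        have : min ε 1 ≤ 1 := min_le_right _ _
        rw [ht_def]; linarith
      have htε : t < ε := by
        have : min ε 1 ≤ ε := min_le_left _ _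
        rw [ht_def]; linarith
      have hy : p x + t • (x - p x) ∈ K := by
        apply hball
        rw [Metric.mem_ball, dist_eq_norm]
        have : p x + t • (x - p x) - p x = t • (x - p x) := by abel
        rw [this, norm_smul, h1, mul_one, Real.norm_eq_abs, abs_of_pos ht0]
        exact htε
      have hd := hpmin x _ hy
      rw [dist_eq_norm, dist_eq_norm, h1] at hd
      have he : x - (p x + t • (x - p x)) = (1 - t) • (x - p x) := by
        rw [sub_smul, one_smul]; abel
      rw [he, norm_smul, h1, mul_one, Real.norm_eq_abs, abs_of_pos (by linarith)] at hd
      linarith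
    · -- second component in frontier of polar
      apply clA
      · intro y hy
        have hv := hvar x y hy
        rw [inner_sub_right] at hv
        rw [real_inner_smul_left]
        have h6 : ⟪x - p x, y⟫ ≤ ⟪x - p x, p x⟫ := by linarith
        have h7 : (1/⟪p x - x, p x⟫) * ⟪x - p x, p x⟫ ≤ (1/⟪p x - x, p x⟫) * ⟪x - p x, y⟫ :=
          mul_le_mul_of_nonpos_left h6 (le_of_lt (one_div_neg.mpr hc'))
        have h8 : (1/⟪p x - x, p x⟫) * ⟪x - p x, p x⟫ = -1 := by
          rw [hce x, one_div, inv_neg, neg_mul, inv_mul_cancel₀ ha.ne']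
        linarith
      · refine ⟨p x, hpmem x, ?_⟩
        rw [real_inner_smul_left, hce x, one_div, inv_neg, neg_mul, inv_mul_cancel₀ ha.ne']
    · -- support condition
      intro x' hx'
      rw [real_inner_smul_left]
      have hv := hvar x x' hx'
      have h9 : ⟪x - p x, p x - x'⟫ = -⟪x - p x, x' - p x⟫ := by
        rw [← inner_neg_right, neg_sub]
      refine mul_nonpos_iff.mpr (Or.inr ⟨le_of_lt (one_div_neg.mpr hc'), by linarith⟩)
  -- Goal 2 : continuity of φ on frontier K₁
  have G2 : ContinuousOn φ (frontier K₁) := by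
    rw [hφ]
    apply ContinuousOn.prodMk hpc.continuousOn
    apply ContinuousOn.fun_smul
    · exact ContinuousOn.div continuousOn_const
        ((Continuous.inner (hpc.sub continuous_id) hpc).continuousOn)
        (fun x hx => (hc x hx).ne)
    · exact (continuous_id.sub hpc).continuousOn
  -- Goal 3 : ψ maps NK into frontier K₁
  have G3 : ∀ z ∈ NK, ψ z ∈ frontier K₁ := by
    intro z hz
    obtain ⟨hz1K, hinner, hz20, hsupp⟩ := hNKfacts z hz
    have hun : ‖(1/‖z.2‖) • z.2‖ = 1 := hunit z.2 hz20
    simp only [hψ]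
    rw [hK₁cl.frontier_eq]
    constructor
    · rw [hmemK₁]
      have hd := hpmin (z.1 - (1/‖z.2‖) • z.2) z.1 hz1K
      rw [dist_eq_norm, dist_eq_norm] at hd
      have he : z.1 - (1/‖z.2‖) • z.2 - z.1 = -((1/‖z.2‖) • z.2) := by abel
      rw [he, norm_neg, hun] at hd
      exact hd
    · intro hint
      obtain ⟨ε, hε, hball⟩ := Metric.mem_nhds_iff.mp (mem_interior_iff_mem_nhds.mp hint)
      set w := z.1 - (1 + ε/2) • ((1/‖z.2‖) • z.2) with hw_def
      have hwmem : w ∈ K₁ := by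
        apply hball
        rw [Metric.mem_ball, dist_eq_norm]
        have he : w - (z.1 - (1/‖z.2‖) • z.2) = -((ε/2) • ((1/‖z.2‖) • z.2)) := by
          rw [hw_def]
          rw [show (1 + ε/2) • ((1/‖z.2‖) • z.2)
              = (1/‖z.2‖) • z.2 + (ε/2) • ((1/‖z.2‖) • z.2) by rw [add_smul, one_smul]]
          abel
        rw [he, norm_neg, norm_smul, hun, mul_one, Real.norm_eq_abs,
          abs_of_pos (by linarith)]
        linarith
      have h2 : ‖w - p w‖ ≤ 1 := (hmemK₁ w).mp hwmem
      have h3 := hkey z hz (1 + ε/2) (by linarith) (p w) (hpmem w)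
      rw [← hw_def] at h3
      nlinarith [norm_nonneg (z.1 - p w), norm_nonneg (w - p w), sq_nonneg ‖z.1 - p w‖]
  -- Goal 4 : continuity of ψ on NK
  have G4 : ContinuousOn ψ NK := by
    rw [hψ]
    apply ContinuousOn.sub continuous_fst.continuousOn
    apply ContinuousOn.fun_smul
    · exact ContinuousOn.div continuousOn_const continuous_snd.norm.continuousOn
        (fun z hz => norm_ne_zero_iff.mpr (hNKfacts z hz).2.2.1)
    · exact continuous_snd.continuousOn
  -- Goal 5 : ψ ∘ φ = id on frontier K₁
  have G5 : ∀ x ∈ frontier K₁, ψ (φ x) = x := by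
    intro x hx
    have h1 := hfx x hx
    have hc' := hc x hx
    simp only [hφ, hψ]
    have hnu : ‖(1/⟪p x - x, p x⟫) • (x - p x)‖ = -(1/⟪p x - x, p x⟫) := by
      rw [norm_smul, h1, mul_one, Real.norm_eq_abs, abs_of_neg (one_div_neg.mpr hc')]
    rw [hnu, smul_smul]
    have h2 : 1 / -(1/⟪p x - x, p x⟫) * (1/⟪p x - x, p x⟫) = -1 := by
      rw [one_div, one_div, inv_neg, inv_inv, neg_mul, mul_inv_cancel₀ hc'.ne]
    rw [h2, neg_one_smul]
    abel
  -- Goal 6 : φ ∘ ψ = id on NK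
  have G6 : ∀ z ∈ NK, φ (ψ z) = z := by
    intro z hz
    obtain ⟨hz1K, hinner, hz20, hsupp⟩ := hNKfacts z hz
    have hun : ‖(1/‖z.2‖) • z.2‖ = 1 := hunit z.2 hz20
    have hnz : (0:ℝ) < ‖z.2‖ := norm_pos_iff.mpr hz20
    simp only [hψ, hφ]
    set w := z.1 - (1/‖z.2‖) • z.2 with hw_def
    have hppsi : p w = z.1 := by
      have h3 : ‖z.1 - p w‖ ^ 2 + 1 ≤ ‖w - p w‖ ^ 2 := by
        have := hkey z hz 1 zero_le_one (p w) (hpmem w)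
        rw [one_smul, ← hw_def] at this
        simpa using this
      have h4 : ‖w - p w‖ ≤ 1 := by
        have hd := hpmin w z.1 hz1K
        rw [dist_eq_norm, dist_eq_norm] at hd
        have he : w - z.1 = -((1/‖z.2‖) • z.2) := by rw [hw_def]; abel
        rw [he, norm_neg, hun] at hd
        exact hd
      have h5 : ‖z.1 - p w‖ = 0 := by
        nlinarith [norm_nonneg (z.1 - p w), norm_nonneg (w - p w)]
      have := norm_sub_eq_zero_iff.mp h5
      exact this.symm
    have e1 : p w - w = (1/‖z.2‖) • z.2 := by
      rw [hppsi, hw_def, sub_sub_cancel]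
    have e2 : ⟪p w - w, p w⟫ = -(1/‖z.2‖) := by
      rw [e1, hppsi, real_inner_smul_left, hinner]
      ring
    have e3 : w - p w = -((1/‖z.2‖) • z.2) := by
      rw [hppsi, hw_def, sub_sub_cancel_left]
    have hprod : (p w, (1 / ⟪p w - w, p w⟫) • (w - p w))
        = (z.1, z.2) := by
      refine Prod.ext hppsi ?_
      show (1 / ⟪p w - w, p w⟫) • (w - p w) = z.2
      rw [e2, e3, smul_neg, smul_smul]
      have h6 : 1 / -(1/‖z.2‖) * (1/‖z.2‖) = -1 := by
        rw [one_div, one_div, inv_neg, inv_inv, neg_mul, mul_inv_cancel₀ hnz.ne']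
      rw [h6, neg_one_smul, neg_neg]
    exact hprod
  -- Goal 7 : NK is compact
  have G7 : IsCompact NK := by
    have himg : NK = φ '' frontier K₁ := by
      apply Set.Subset.antisymm
      · intro z hz
        exact ⟨ψ z, G3 z hz, G6 z hz⟩
      · rintro _ ⟨x, hx, rfl⟩
        exact G1 x hx
    rw [himg]
    have hfrc : IsCompact (frontier K₁) :=
      hK₁comp.of_isClosed_subset isClosed_frontier (hK₁cl.frontier_eq ▸ Set.diff_subset)
    exact hfrc.image_of_continuousOn G2
  exact ⟨G1, G2, G3, G4, G5, G6, G7⟩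
end

section
/- For every (x, ℓ) ∈ N(K), one has u_K(x − (1/‖ℓ‖) • ℓ) = ℓ. -/
open scoped RealInnerProductSpace

/-- For every `(x, ℓ) ∈ N(K)`, one has `u_K(x − (1/‖ℓ‖) • ℓ) = ℓ`. -/
theorem stmt_6 {n : ℕ} (hn : 0 < n)
    (K : Set (EuclideanSpace ℝ (Fin n)))
    (hKcomp : IsCompact K) (hKconv : Convex ℝ K)
    (h0 : (0 : EuclideanSpace ℝ (Fin n)) ∈ interior K)
    (p : EuclideanSpace ℝ (Fin n) → EuclideanSpace ℝ (Fin n))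
    (hpmem : ∀ x, p x ∈ K)
    (hpmin : ∀ x, ∀ y ∈ K, dist x (p x) ≤ dist x y)
    (NK : Set (EuclideanSpace ℝ (Fin n) × EuclideanSpace ℝ (Fin n)))
    (hNK : NK = {z | z.1 ∈ frontier K ∧
        z.2 ∈ frontier {m : EuclideanSpace ℝ (Fin n) | ∀ y ∈ K, -1 ≤ ⟪m, y⟫} ∧
        ∀ x' ∈ K, ⟪z.2, z.1 - x'⟫ ≤ 0})
    (x ℓ : EuclideanSpace ℝ (Fin n)) (hxl : (x, ℓ) ∈ NK) :
    (1 / ⟪p (x - (1 / ‖ℓ‖) • ℓ) - (x - (1 / ‖ℓ‖) • ℓ), p (x - (1 / ‖ℓ‖) • ℓ)⟫) •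
        ((x - (1 / ‖ℓ‖) • ℓ) - p (x - (1 / ‖ℓ‖) • ℓ)) = ℓ := by
  subst hNK
  obtain ⟨hx, hl, hmin⟩ := hxl
  simp only at hx hl hmin
  have hKcl : IsClosed K := hKcomp.isClosed
  have hxK : x ∈ K := by
    have := frontier_subset_closure hx
    rwa [hKcl.closure_eq] at this
  -- a bound on K
  obtain ⟨R0, hR0⟩ := hKcomp.isBounded.subset_closedBall 0
  set R : ℝ := max R0 1 with hRdef
  have hRpos : (0:ℝ) < R := lt_of_lt_of_le one_pos (le_max_right _ _)
  have hKR : K ⊆ Metric.closedBall 0 R :=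
    hR0.trans (Metric.closedBall_subset_closedBall (le_max_left _ _))
  -- the polar set is closed
  have hPcl : IsClosed {m : EuclideanSpace ℝ (Fin n) | ∀ y ∈ K, -1 ≤ ⟪m, y⟫} := by
    have heq : {m : EuclideanSpace ℝ (Fin n) | ∀ y ∈ K, -1 ≤ ⟪m, y⟫}
        = ⋂ y ∈ K, {m : EuclideanSpace ℝ (Fin n) | -1 ≤ ⟪m, y⟫} := by
      ext m; simp
    rw [heq]
    exact isClosed_biInter fun y _ => isClosed_le continuous_const
      (Continuous.inner continuous_id continuous_const)
  have hlP : ∀ y ∈ K, -1 ≤ ⟪ℓ, y⟫ := by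
    have := frontier_subset_closure hl
    rwa [hPcl.closure_eq] at this
  -- ⟪ℓ, x⟫ = -1
  have hlx : ⟪ℓ, x⟫ = -1 := by
    by_contra h
    have h1 : -1 < ⟪ℓ, x⟫ := lt_of_le_of_ne (hlP x hxK) (Ne.symm h)
    have hint : ℓ ∈ interior {m : EuclideanSpace ℝ (Fin n) | ∀ y ∈ K, -1 ≤ ⟪m, y⟫} := by
      apply mem_interior.2
      refine ⟨Metric.ball ℓ ((1 + ⟪ℓ, x⟫) / R), ?_, Metric.isOpen_ball,
        Metric.mem_ball_self (div_pos (by linarith) hRpos)⟩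
      intro m hm
      intro y hy
      have hyR : ‖y‖ ≤ R := by simpa using hKR hy
      have h2 : ⟪ℓ, x⟫ ≤ ⟪ℓ, y⟫ := by
        have := hmin y hy
        rw [inner_sub_right] at this; linarith
      have h3 : -(‖m - ℓ‖ * ‖y‖) ≤ ⟪m - ℓ, y⟫ :=
        neg_le_of_abs_le (abs_real_inner_le_norm _ _)
      have h4 : ‖m - ℓ‖ < (1 + ⟪ℓ, x⟫) / R := by
        rw [Metric.mem_ball, dist_eq_norm] at hm; exact hm
      have h5 : ‖m - ℓ‖ * ‖y‖ < 1 + ⟪ℓ, x⟫ := by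
        calc ‖m - ℓ‖ * ‖y‖ ≤ ‖m - ℓ‖ * R := by
              exact mul_le_mul_of_nonneg_left hyR (norm_nonneg _)
          _ < 1 + ⟪ℓ, x⟫ := by
              rw [← div_mul_cancel₀ (1 + ⟪ℓ, x⟫) (ne_of_gt hRpos)]
              exact mul_lt_mul_of_pos_right h4 hRpos
      have h6 : ⟪m, y⟫ = ⟪ℓ, y⟫ + ⟪m - ℓ, y⟫ := by
        rw [inner_sub_left]; ring
      show -1 ≤ ⟪m, y⟫
      linarith
    rw [frontier, Set.mem_diff] at hl
    exact hl.2 hint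
  have hl0 : ℓ ≠ 0 := by
    intro h; rw [h] at hlx; simp at hlx
  set c : ℝ := 1 / ‖ℓ‖ with hcdef
  have hc : 0 < c := one_div_pos.mpr (norm_pos_iff.mpr hl0)
  set z : EuclideanSpace ℝ (Fin n) := x - c • ℓ with hzdef
  -- p z = x
  have hkey : ∀ y ∈ K, 0 ≤ ⟪z - x, x - y⟫ := by
    intro y hy
    have : ⟪z - x, x - y⟫ = -c * ⟪ℓ, x - y⟫ := by
      rw [hzdef]
      have : x - c • ℓ - x = -(c • ℓ) := by abel
      rw [this, inner_neg_left, real_inner_smul_left]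
      ring
    rw [this]
    have := hmin y hy
    nlinarith
  have hpz : p z = x := by
    have hd : ‖z - p z‖ ≤ ‖z - x‖ := by
      have := hpmin z x hxK
      rwa [dist_eq_norm, dist_eq_norm] at this
    have hexp : ‖z - p z‖ ^ 2 = ‖z - x‖ ^ 2 + 2 * ⟪z - x, x - p z⟫ + ‖x - p z‖ ^ 2 := by
      have : z - p z = (z - x) + (x - p z) := by abel
      rw [this, norm_add_sq_real]
    have h1 : 0 ≤ ⟪z - x, x - p z⟫ := hkey _ (hpmem z)
    have h2 : ‖x - p z‖ ^ 2 ≤ 0 := by nlinarith [norm_nonneg (z - p z), norm_nonneg (z - x)]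
    have h3 : ‖x - p z‖ = 0 := by nlinarith [norm_nonneg (x - p z)]
    have := norm_sub_eq_zero_iff.mp h3
    exact this.symm
  -- final computation
  have hz1 : p z - z = c • ℓ := by rw [hpz, hzdef]; abel
  have hz2 : z - p z = -(c • ℓ) := by rw [hpz, hzdef]; abel
  show (1 / ⟪p z - z, p z⟫) • (z - p z) = ℓ
  rw [hz1, hz2, hpz, real_inner_smul_left, hlx]
  have hcne : c ≠ 0 := ne_of_gt hc
  rw [smul_neg, smul_smul]
  field_simp
  simp
end

section
/- If ℓ ∈ frontier K°, then the minimum of y ↦ ⟪ℓ, y⟫ over K is attained and equals −1. Consequently, for every (x, ℓ) ∈ N(K) one has ⟪ℓ, x⟫ = −1. -/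
open scoped RealInnerProductSpace

/-- If `ℓ ∈ frontier K°`, then the minimum of `y ↦ ⟪ℓ, y⟫` over `K` is attained and equals
`−1`. Consequently, for every `(x, ℓ) ∈ N(K)` one has `⟪ℓ, x⟫ = −1`. -/
theorem stmt_7 {n : ℕ} (hn : 0 < n)
    (K : Set (EuclideanSpace ℝ (Fin n)))
    (hKcomp : IsCompact K) (hKconv : Convex ℝ K)
    (h0 : (0 : EuclideanSpace ℝ (Fin n)) ∈ interior K)
    (Kpolar : Set (EuclideanSpace ℝ (Fin n)))
    (hKpolar : Kpolar = {ℓ : EuclideanSpace ℝ (Fin n) | ∀ y ∈ K, -1 ≤ ⟪ℓ, y⟫})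
    (NK : Set (EuclideanSpace ℝ (Fin n) × EuclideanSpace ℝ (Fin n)))
    (hNK : NK = {z | z.1 ∈ frontier K ∧ z.2 ∈ frontier Kpolar ∧
        ∀ x' ∈ K, ⟪z.2, z.1 - x'⟫ ≤ 0}) :
    (∀ ℓ ∈ frontier Kpolar,
        IsLeast {r : ℝ | ∃ y ∈ K, ⟪ℓ, y⟫ = r} (-1)) ∧
      ∀ x ℓ : EuclideanSpace ℝ (Fin n), (x, ℓ) ∈ NK → ⟪ℓ, x⟫ = -1 := by
  have hKne : (0 : EuclideanSpace ℝ (Fin n)) ∈ K := interior_subset h0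
  -- Kpolar is closed
  have hclosed : IsClosed Kpolar := by
    rw [hKpolar]
    have : {ℓ : EuclideanSpace ℝ (Fin n) | ∀ y ∈ K, -1 ≤ ⟪ℓ, y⟫} =
        ⋂ y ∈ K, {ℓ : EuclideanSpace ℝ (Fin n) | -1 ≤ ⟪ℓ, y⟫} := by
      ext ℓ; simp
    rw [this]
    exact isClosed_biInter fun y _ =>
      isClosed_le continuous_const (continuous_id.inner continuous_const)
  -- a norm bound on K
  obtain ⟨R₀, hR₀⟩ := hKcomp.isBounded.subset_closedBall (0 : EuclideanSpace ℝ (Fin n))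
  set R : ℝ := max R₀ 1 with hRdef
  have hR1 : (1 : ℝ) ≤ R := le_max_right _ _
  have hRpos : (0 : ℝ) < R := lt_of_lt_of_le one_pos hR1
  have hRb : ∀ y ∈ K, ‖y‖ ≤ R := by
    intro y hy
    have := hR₀ hy
    rw [Metric.mem_closedBall, dist_zero_right] at this
    exact this.trans (le_max_left _ _)
  have key : ∀ ℓ ∈ frontier Kpolar, IsLeast {r : ℝ | ∃ y ∈ K, ⟪ℓ, y⟫ = r} (-1) := by
    intro ℓ hℓ
    have hℓP : ∀ y ∈ K, -1 ≤ ⟪ℓ, y⟫ := by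
      have h1 : ℓ ∈ Kpolar := by
        have := frontier_subset_closure hℓ
        rwa [hclosed.closure_eq] at this
      rw [hKpolar] at h1; exact h1
    obtain ⟨y₀, hy₀K, hy₀min⟩ := hKcomp.exists_isMinOn ⟨0, hKne⟩
      ((continuous_const.inner continuous_id).continuousOn :
        ContinuousOn (fun y => ⟪ℓ, y⟫) K)
    have hm1 : ⟪ℓ, y₀⟫ = -1 := by
      by_contra h
      have hm : -1 < ⟪ℓ, y₀⟫ := lt_of_le_of_ne (hℓP _ hy₀K) (Ne.symm h)
      have hεpos : (0 : ℝ) < (⟪ℓ, y₀⟫ + 1) / R := by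
        apply div_pos (by linarith) hRpos
      have hint : ℓ ∈ interior Kpolar := by
        apply mem_interior.mpr
        refine ⟨Metric.ball ℓ ((⟪ℓ, y₀⟫ + 1) / R), ?_, Metric.isOpen_ball,
          Metric.mem_ball_self hεpos⟩
        intro ℓ' hℓ'
        rw [hKpolar]
        intro y hy
        have h1 : ‖ℓ' - ℓ‖ < (⟪ℓ, y₀⟫ + 1) / R := by
          rwa [Metric.mem_ball, dist_eq_norm] at hℓ'
        have h2 : ‖y‖ ≤ R := hRb y hy
        have h3 : |⟪ℓ' - ℓ, y⟫| ≤ ‖ℓ' - ℓ‖ * ‖y‖ := abs_real_inner_le_norm _ _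
        have h4 : ⟪ℓ' - ℓ, y⟫ = ⟪ℓ', y⟫ - ⟪ℓ, y⟫ := inner_sub_left _ _ _
        have h5 : ‖ℓ' - ℓ‖ * ‖y‖ ≤ ((⟪ℓ, y₀⟫ + 1) / R) * R :=
          mul_le_mul h1.le h2 (norm_nonneg _) (le_of_lt hεpos)
        have h6 : ((⟪ℓ, y₀⟫ + 1) / R) * R = ⟪ℓ, y₀⟫ + 1 :=
          div_mul_cancel₀ _ (ne_of_gt hRpos)
        have h7 : ⟪ℓ, y₀⟫ ≤ ⟪ℓ, y⟫ := isMinOn_iff.mp hy₀min y hy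
        have h8 : |⟪ℓ' - ℓ, y⟫| ≤ ⟪ℓ, y₀⟫ + 1 := by linarith
        have h9 : -(⟪ℓ, y₀⟫ + 1) ≤ ⟪ℓ', y⟫ - ⟪ℓ, y⟫ := by
          rw [← h4]; exact neg_le_of_abs_le h8
        linarith
      exact hℓ.2 hint
    exact ⟨⟨y₀, hy₀K, hm1⟩, fun r ⟨y, hy, hr⟩ => hr ▸ hℓP y hy⟩
  refine ⟨key, ?_⟩
  intro x ℓ hmem
  rw [hNK] at hmem
  obtain ⟨hx, hℓ, hsupp⟩ := hmem
  have hxK : x ∈ K := hKcomp.isClosed.frontier_subset hx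
  obtain ⟨⟨y₀, hy₀K, hy₀⟩, hlb⟩ := key ℓ hℓ
  have h1 : ⟪ℓ, x - y₀⟫ ≤ 0 := hsupp y₀ hy₀K
  rw [inner_sub_right] at h1
  have h2 : (-1 : ℝ) ≤ ⟪ℓ, x⟫ := hlb ⟨x, hxK, rfl⟩
  linarith
end

section
/- The normal cycle of K is self-dual: for all x, ℓ ∈ ℝ^n, (x, ℓ) ∈ N(K) if and only if (ℓ, x) ∈ N(K°), where N(K°) = {(ℓ, m) ∈ frontier K° × frontier (K°)° : ⟪m, ℓ − ℓ'⟫ ≤ 0 for all ℓ' ∈ K°}. -/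
open scoped RealInnerProductSpace

variable {E : Type*} [NormedAddCommGroup E] [InnerProductSpace ℝ E]

variable {E : Type*} [NormedAddCommGroup E] [InnerProductSpace ℝ E]

lemma polar_closed (A B : Set E) (hB : B = {q : E | ∀ p ∈ A, -1 ≤ ⟪q, p⟫}) :
    IsClosed B := by
  have : B = ⋂ p ∈ A, {q : E | -1 ≤ ⟪q, p⟫} := by rw [hB]; ext q; simp
  rw [this]
  exact isClosed_biInter fun p _ =>
    isClosed_le continuous_const (Continuous.inner continuous_id continuous_const)

lemma key_lemma (A B : Set E) (hA : IsCompact A)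
    (hB : B = {q : E | ∀ p ∈ A, -1 ≤ ⟪q, p⟫})
    (p : E) (hp : p ∈ A) (q : E) (hq : q ∈ frontier B)
    (hmin : ∀ p' ∈ A, ⟪q, p⟫ ≤ ⟪q, p'⟫) : ⟪q, p⟫ = -1 := by
  have hBc : IsClosed B := polar_closed A B hB
  have hqB : q ∈ B := hBc.frontier_subset hq
  have hge : -1 ≤ ⟪q, p⟫ := by rw [hB] at hqB; exact hqB p hp
  -- get sequence outside B
  have hqc : q ∈ closure Bᶜ := by
    rw [frontier_eq_closure_inter_closure] at hq; exact hq.2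
  obtain ⟨u, hu, hul⟩ := mem_closure_iff_seq_limit.1 hqc
  have hex : ∀ k, ∃ y ∈ A, ⟪u k, y⟫ < -1 := by
    intro k
    have := hu k
    rw [hB] at this
    simpa using this
  choose y hyA hylt using hex
  obtain ⟨z, hzA, φ, hφ, hzt⟩ := hA.tendsto_subseq hyA
  have htend : Filter.Tendsto (fun k => ⟪u (φ k), y (φ k)⟫) Filter.atTop (nhds ⟪q, z⟫) :=
    Filter.Tendsto.inner (hul.comp hφ.tendsto_atTop) hzt
  have hqz : ⟪q, z⟫ ≤ -1 :=
    le_of_tendsto htend (Filter.Eventually.of_forall fun k => (hylt (φ k)).le)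
  linarith [hmin z hzA]

-- polar compactness (in proper space)
lemma polar_compact [ProperSpace E] (A B : Set E)
    (h0 : (0 : E) ∈ interior A)
    (hB : B = {q : E | ∀ p ∈ A, -1 ≤ ⟪q, p⟫}) : IsCompact B := by
  obtain ⟨ε, hε, hball⟩ := Metric.isOpen_iff.1 isOpen_interior 0 h0
  have hsub : B ⊆ Metric.closedBall 0 (2 / ε) := by
    intro q hq
    rw [hB] at hq
    rcases eq_or_ne q 0 with rfl | hq0
    · simp [Metric.mem_closedBall]; positivity
    · have hqn : 0 < ‖q‖ := norm_pos_iff.2 hq0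
      have hy : (-(ε / 2) / ‖q‖) • q ∈ A := by
        apply interior_subset
        apply hball
        simp only [Metric.mem_ball, dist_zero_right, norm_smul, Real.norm_eq_abs]
        rw [abs_div, abs_neg, abs_of_pos (by positivity : (0:ℝ) < ε/2), abs_of_pos hqn]
        rw [div_mul_cancel₀ _ hqn.ne']
        linarith
      have := hq _ hy
      rw [real_inner_smul_right, real_inner_self_eq_norm_sq] at this
      have h1 : -(ε / 2) / ‖q‖ * ‖q‖ ^ 2 = -(ε / 2) * ‖q‖ := by
        field_simp
      rw [h1] at this
      simp only [Metric.mem_closedBall, dist_zero_right]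
      rw [le_div_iff₀ hε]
      nlinarith
  exact (isCompact_closedBall (0:E) (2/ε)).of_isClosed_subset
    (by
      have : B = ⋂ p ∈ A, {q : E | -1 ≤ ⟪q, p⟫} := by rw [hB]; ext q; simp
      rw [this]
      exact isClosed_biInter fun p _ =>
        isClosed_le continuous_const (Continuous.inner continuous_id continuous_const))
    hsub

-- bipolar theorem
lemma bipolar [CompleteSpace E] (K : Set E) (hKcl : IsClosed K) (hKconv : Convex ℝ K)
    (h0 : (0 : E) ∈ K)
    (Kp Kbp : Set E)
    (hKp : Kp = {ℓ : E | ∀ y ∈ K, -1 ≤ ⟪ℓ, y⟫})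
    (hKbp : Kbp = {m : E | ∀ ℓ ∈ Kp, -1 ≤ ⟪m, ℓ⟫}) : Kbp = K := by
  apply Set.Subset.antisymm
  · intro x hx
    by_contra hxK
    obtain ⟨f, u, hfu, hux⟩ := geometric_hahn_banach_closed_point hKconv hKcl hxK
    have hu0 : 0 < u := by have := hfu 0 h0; simpa using this
    set ℓ₀ := (InnerProductSpace.toDual ℝ E).symm f with hℓ₀
    have hℓ₀a : ∀ y : E, ⟪ℓ₀, y⟫ = f y := fun y => InnerProductSpace.toDual_symm_apply
    have hℓKp : (-u⁻¹) • ℓ₀ ∈ Kp := by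
      rw [hKp]
      intro y hy
      rw [real_inner_smul_left, hℓ₀a]
      have := hfu y hy
      have h2 : u⁻¹ * f y ≤ u⁻¹ * u := mul_le_mul_of_nonneg_left this.le (inv_pos.2 hu0).le
      have h3 : u⁻¹ * u = 1 := inv_mul_cancel₀ hu0.ne'
      linarith
    rw [hKbp] at hx
    have := hx _ hℓKp
    rw [real_inner_smul_right, real_inner_comm, hℓ₀a] at this
    have h2 : u⁻¹ * u < u⁻¹ * f x := mul_lt_mul_of_pos_left hux (inv_pos.2 hu0)
    have h3 : u⁻¹ * u = 1 := inv_mul_cancel₀ hu0.ne'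
    linarith
  · intro y hy
    rw [hKbp]
    intro ℓ' hℓ'
    rw [hKp] at hℓ'
    rw [real_inner_comm]
    exact hℓ' y hy

/-- The normal cycle of `K` is self-dual: `(x, ℓ) ∈ N(K)` iff `(ℓ, x) ∈ N(K°)`. -/
theorem stmt_9 {n : ℕ} (hn : 0 < n)
    (K : Set (EuclideanSpace ℝ (Fin n)))
    (hKcomp : IsCompact K) (hKconv : Convex ℝ K)
    (h0 : (0 : EuclideanSpace ℝ (Fin n)) ∈ interior K)
    (Kpolar : Set (EuclideanSpace ℝ (Fin n)))
    (hKpolar : Kpolar = {ℓ : EuclideanSpace ℝ (Fin n) | ∀ y ∈ K, -1 ≤ ⟪ℓ, y⟫})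
    (Kbipolar : Set (EuclideanSpace ℝ (Fin n)))
    (hKbipolar : Kbipolar = {m : EuclideanSpace ℝ (Fin n) | ∀ ℓ ∈ Kpolar, -1 ≤ ⟪m, ℓ⟫})
    (x ℓ : EuclideanSpace ℝ (Fin n)) :
    (x ∈ frontier K ∧ ℓ ∈ frontier Kpolar ∧ ∀ x' ∈ K, ⟪ℓ, x - x'⟫ ≤ 0) ↔
      (ℓ ∈ frontier Kpolar ∧ x ∈ frontier Kbipolar ∧ ∀ ℓ' ∈ Kpolar, ⟪x, ℓ - ℓ'⟫ ≤ 0) := by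
  have hKcl : IsClosed K := hKcomp.isClosed
  have hbip : Kbipolar = K :=
    bipolar K hKcl hKconv (interior_subset h0) Kpolar Kbipolar hKpolar hKbipolar
  have hKpcomp : IsCompact Kpolar := polar_compact K Kpolar h0 hKpolar
  have hKpcl : IsClosed Kpolar := polar_closed K Kpolar hKpolar
  constructor
  · rintro ⟨hx, hℓ, hmin⟩
    have hxK : x ∈ K := hKcl.frontier_subset hx
    have heq : ⟪ℓ, x⟫ = -1 :=
      key_lemma K Kpolar hKcomp hKpolar x hxK ℓ hℓ
        (fun x' hx' => by have := hmin x' hx'; rw [inner_sub_right] at this; linarith)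
    refine ⟨hℓ, by rw [hbip]; exact hx, fun ℓ' hℓ' => ?_⟩
    have h1 : -1 ≤ ⟪ℓ', x⟫ := by rw [hKpolar] at hℓ'; exact hℓ' x hxK
    rw [inner_sub_right]
    have h2 := real_inner_comm x ℓ
    have h3 := real_inner_comm x ℓ'
    linarith
  · rintro ⟨hℓ, hxb, hmin⟩
    have hx : x ∈ frontier K := by rw [← hbip]; exact hxb
    have hℓK : ℓ ∈ Kpolar := hKpcl.frontier_subset hℓ
    have heq : ⟪x, ℓ⟫ = -1 :=
      key_lemma Kpolar Kbipolar hKpcomp hKbipolar ℓ hℓK x hxb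
        (fun ℓ' hℓ' => by have := hmin ℓ' hℓ'; rw [inner_sub_right] at this; linarith)
    refine ⟨hx, hℓ, fun x' hx' => ?_⟩
    have h1 : -1 ≤ ⟪ℓ, x'⟫ := by rw [hKpolar] at hℓK; exact hℓK x' hx'
    rw [inner_sub_right]
    have h2 := real_inner_comm x ℓ
    linarith
end

section
/- Let A ⊆ ℝ^n be a closed set and let x be a point in the frontier of the interior of A. Let f : ℝ^n → ℝ be a polynomial function whose gradient ∇f(x) is nonzero, and suppose there exists an open set U containing x such that frontier A ∩ U ⊆ {y ∈ ℝ^n : f(y) = 0}. Then there exists an open set V with x ∈ V ⊆ U such that frontier A ∩ V = {y ∈ V : f(y) = 0}; moreover, after replacing f by −f if necessary, A ∩ V = {y ∈ V : f(y) ≥ 0}. -/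
open scoped Gradient RealInnerProductSpace
open Set Metric

section StmtAux

variable {E : Type*} [NormedAddCommGroup E] [InnerProductSpace ℝ E]

/-- Signed coordinate along the direction `u`, centered at `x`. -/
private def projTau (x u z : E) : ℝ := ⟪u, z - x⟫

/-- Component of `z - x` orthogonal to `u`. -/
private def projPerp (x u z : E) : E := z - x - projTau x u z • u

private theorem projTau_add (x u : E) (hun : ‖u‖ = 1) (z : E) (s : ℝ) :
    projTau x u (z + s • u) = projTau x u z + s := by
  unfold projTau
  rw [show z + s • u - x = (z - x) + s • u by abel, inner_add_right, real_inner_smul_right,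
    real_inner_self_eq_norm_mul_norm, hun]
  ring

private theorem projPerp_add (x u : E) (hun : ‖u‖ = 1) (z : E) (s : ℝ) :
    projPerp x u (z + s • u) = projPerp x u z := by
  unfold projPerp
  rw [projTau_add x u hun, add_smul]
  abel

private theorem projTau_self (x u : E) : projTau x u x = 0 := by simp [projTau]

private theorem projPerp_self (x u : E) : projPerp x u x = 0 := by
  simp [projPerp, projTau_self]

private theorem projTau_aff (x u : E) (a b : E) (t : ℝ) :
    projTau x u (a + t • (b - a)) = projTau x u a + t * (projTau x u b - projTau x u a) := by
  unfold projTau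
  rw [show a + t • (b - a) - x = (a - x) + t • (b - a) by abel, inner_add_right,
    real_inner_smul_right]
  have hba : (⟪u, b - a⟫ : ℝ) = ⟪u, b - x⟫ - ⟪u, a - x⟫ := by
    rw [← inner_sub_right]; congr 1; abel
  rw [hba]

private theorem projPerp_aff (x u : E) (a b : E) (t : ℝ) :
    projPerp x u (a + t • (b - a)) = projPerp x u a + t • (projPerp x u b - projPerp x u a) := by
  unfold projPerp
  rw [projTau_aff]
  module

private theorem projTau_neg (x u z : E) : projTau x (-u) z = -projTau x u z := by
  simp [projTau]

private theorem projPerp_neg (x u z : E) : projPerp x (-u) z = projPerp x u z := by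
  simp only [projPerp, projTau_neg, smul_neg, neg_smul, neg_neg]

private theorem norm_sub_le_proj (x u : E) (hun : ‖u‖ = 1) (z : E) :
    ‖z - x‖ ≤ ‖projPerp x u z‖ + |projTau x u z| := by
  calc ‖z - x‖ = ‖projPerp x u z + projTau x u z • u‖ := by unfold projPerp; congr 1; abel
  _ ≤ ‖projPerp x u z‖ + ‖projTau x u z • u‖ := norm_add_le _ _
  _ = ‖projPerp x u z‖ + |projTau x u z| := by
      rw [norm_smul, hun, Real.norm_eq_abs, mul_one]

private theorem dist_axis_proj (x u : E) (z : E) :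
    dist z (x + projTau x u z • u) = ‖projPerp x u z‖ := by
  rw [dist_eq_norm]
  congr 1
  unfold projPerp
  abel

private theorem projTau_continuous (x u : E) : Continuous (projTau x u) :=
  (innerSL ℝ u).continuous.comp (continuous_id.sub continuous_const)

private theorem projPerp_continuous (x u : E) : Continuous (projPerp x u) :=
  (continuous_id.sub continuous_const).sub ((projTau_continuous x u).smul continuous_const)

/-- Strict monotonicity of a `C¹` function along a direction of positive directional
derivative. -/
private theorem mono_lemma (f : E → ℝ) (hcd : ContDiff ℝ 1 f) (u : E) (B : Set E)
    (hB : ∀ z ∈ B, 0 < fderiv ℝ f z u) (z : E) (a b : ℝ) (hab : a < b)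
    (hin : ∀ s ∈ Icc a b, z + s • u ∈ B) : f (z + a • u) < f (z + b • u) := by
  have hfc : Continuous f := hcd.continuous
  have hderiv : ∀ s : ℝ, HasDerivAt (fun t : ℝ => f (z + t • u))
      (fderiv ℝ f (z + s • u) u) s := by
    intro s
    have h1 : HasDerivAt (fun t : ℝ => z + t • u) u s := by
      simpa using ((hasDerivAt_id s).smul_const u).const_add z
    have h2 := (hcd.differentiable one_ne_zero (z + s • u)).hasFDerivAt
    exact h2.comp_hasDerivAt s h1
  have := strictMonoOn_of_deriv_pos (convex_Icc a b)
    (Continuous.continuousOn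
      (hfc.comp (continuous_const.add (continuous_id.smul continuous_const))))
    (f := fun t : ℝ => f (z + t • u)) ?_
  · exact this (left_mem_Icc.2 hab.le) (right_mem_Icc.2 hab.le) hab
  · intro s hs
    rw [interior_Icc] at hs
    rw [(hderiv s).deriv]
    exact hB _ (hin s (Ioo_subset_Icc_self hs))

/-- Any point of the open box with `f > 0` is joined to the reference point
`x + (3ε/4) • u` by a connected subset of the box on which `f > 0`. -/
private theorem conn_lemma (f : E → ℝ) (x u : E) (hun : ‖u‖ = 1) {ε δ : ℝ}
    (hεpos : 0 < ε) (hδpos : 0 < δ)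
    (mono : ∀ (z : E) (a b : ℝ), a < b →
      (∀ s ∈ Icc a b, ‖projPerp x u (z + s • u)‖ ≤ δ ∧ |projTau x u (z + s • u)| ≤ ε) →
      f (z + a • u) < f (z + b • u))
    (slab : ∀ z : E, ‖projPerp x u z‖ ≤ δ → ε/2 ≤ projTau x u z → projTau x u z ≤ ε → 0 < f z)
    (y : E) (hy1 : ‖projPerp x u y‖ < δ) (hy2 : |projTau x u y| < ε) (hfy : 0 < f y) :
    ∃ C : Set E, IsPreconnected C ∧
      (∀ w ∈ C, (‖projPerp x u w‖ < δ ∧ |projTau x u w| < ε) ∧ 0 < f w) ∧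
      y ∈ C ∧ x + (3 * ε / 4) • u ∈ C := by
  have habs := abs_lt.1 hy2
  set τ : E → ℝ := projTau x u with hτdef
  set π : E → E := projPerp x u with hπdef
  have hτadd : ∀ (z : E) (s : ℝ), τ (z + s • u) = τ z + s := projTau_add x u hun
  have hπadd : ∀ (z : E) (s : ℝ), π (z + s • u) = π z := projPerp_add x u hun
  set p : E := x + (3 * ε / 4) • u with hp
  have hτp : τ p = 3 * ε / 4 := by rw [hp, hτadd, hτdef, projTau_self]; ring
  have hπp : π p = 0 := by rw [hp, hπadd, hπdef]; exact projPerp_self x u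
  set m := max (τ y) (3 * ε / 4) with hm
  have hm1 : 3 * ε / 4 ≤ m := le_max_right _ _
  have hm2 : τ y ≤ m := le_max_left _ _
  have hmlt : m < ε := max_lt habs.2 (by linarith)
  set y' : E := y + (m - τ y) • u with hy'
  have hτy' : τ y' = m := by rw [hy', hτadd]; ring
  have hπy' : π y' = π y := hπadd y _
  have seg1 : segment ℝ y y' ⊆ {w : E | (‖π w‖ < δ ∧ |τ w| < ε) ∧ 0 < f w} := by
    rw [segment_eq_image']
    rintro _ ⟨t, ht, rfl⟩
    beta_reduce
    have hrew : y + t • (y' - y) = y + (t * (m - τ y)) • u := by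
      rw [hy', show y + (m - τ y) • u - y = (m - τ y) • u by abel, smul_smul]
    rw [hrew]
    have hs0 : 0 ≤ t * (m - τ y) := mul_nonneg ht.1 (by linarith)
    have hs1 : t * (m - τ y) ≤ m - τ y := by nlinarith [ht.2]
    have hVmem : ‖π (y + (t * (m - τ y)) • u)‖ < δ ∧ |τ (y + (t * (m - τ y)) • u)| < ε := by
      refine ⟨by rw [hπadd]; exact hy1, ?_⟩
      rw [hτadd, abs_lt]
      exact ⟨by linarith [habs.1], by linarith⟩
    refine ⟨hVmem, ?_⟩
    rcases eq_or_lt_of_le hs0 with h|h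
    · rw [← h, zero_smul, add_zero]; exact hfy
    · have := mono y 0 (t * (m - τ y)) h (fun s hs => by
        constructor
        · rw [hπadd]; exact hy1.le
        · rw [hτadd, abs_le]; exact ⟨by linarith [hs.1, habs.1], by linarith [hs.2]⟩)
      have h0 : f (y + (0:ℝ) • u) = f y := by rw [zero_smul, add_zero]
      rw [h0] at this
      linarith
  have seg2 : segment ℝ y' p ⊆ {w : E | (‖π w‖ < δ ∧ |τ w| < ε) ∧ 0 < f w} := by
    rw [segment_eq_image']
    rintro _ ⟨t, ht, rfl⟩
    beta_reduce
    have hπw : π (y' + t • (p - y')) = (1 - t) • π y := by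
      rw [hπdef, projPerp_aff, ← hπdef, hπp, hπy', sub_smul, one_smul]
      module
    have hτw : τ (y' + t • (p - y')) = m + t * (3 * ε / 4 - m) := by
      rw [hτdef, projTau_aff, ← hτdef, hτp, hτy']
    have hτw1 : 3 * ε / 4 ≤ m + t * (3 * ε / 4 - m) := by nlinarith [ht.1, ht.2]
    have hτw2 : m + t * (3 * ε / 4 - m) ≤ m := by nlinarith [ht.1, ht.2]
    have hπwn : ‖π (y' + t • (p - y'))‖ ≤ ‖π y‖ := by
      rw [hπw, norm_smul, Real.norm_eq_abs, abs_of_nonneg (by linarith [ht.2])]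
      nlinarith [norm_nonneg (π y), ht.1, ht.2]
    have hVmem : ‖π (y' + t • (p - y'))‖ < δ ∧ |τ (y' + t • (p - y'))| < ε := by
      refine ⟨lt_of_le_of_lt hπwn hy1, ?_⟩
      rw [hτw, abs_lt]
      exact ⟨by linarith, by linarith⟩
    exact ⟨hVmem, slab _ (hπwn.trans hy1.le) (by rw [hτw]; linarith)
      (by rw [hτw]; linarith)⟩
  refine ⟨segment ℝ y y' ∪ segment ℝ y' p, ?_, ?_,
    Or.inl (left_mem_segment ℝ y y'), Or.inr (right_mem_segment ℝ y' p)⟩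
  · exact IsPreconnected.union y' (right_mem_segment ℝ y y') (left_mem_segment ℝ y' p)
      (convex_segment y y').isPreconnected (convex_segment y' p).isPreconnected
  · intro w hw
    rcases hw with hw|hw
    · exact seg1 hw
    · exact seg2 hw

/-- Points of the box where `f` vanishes are in the closure of the positive part. -/
private theorem clos_lemma (f : E → ℝ) (x u : E) (hun : ‖u‖ = 1) {ε δ : ℝ}
    (hεpos : 0 < ε) (hδpos : 0 < δ)
    (mono : ∀ (z : E) (a b : ℝ), a < b →
      (∀ s ∈ Icc a b, ‖projPerp x u (z + s • u)‖ ≤ δ ∧ |projTau x u (z + s • u)| ≤ ε) →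
      f (z + a • u) < f (z + b • u))
    (z : E) (hz1 : ‖projPerp x u z‖ < δ) (hz2 : |projTau x u z| < ε) (hfz : f z = 0) :
    z ∈ closure {w : E | (‖projPerp x u w‖ < δ ∧ |projTau x u w| < ε) ∧ 0 < f w} := by
  have habs := abs_lt.1 hz2
  set τ : E → ℝ := projTau x u with hτdef
  set π : E → E := projPerp x u with hπdef
  have hτadd : ∀ (z : E) (s : ℝ), τ (z + s • u) = τ z + s := projTau_add x u hun
  have hπadd : ∀ (z : E) (s : ℝ), π (z + s • u) = π z := projPerp_add x u hun
  have hc0 : Continuous (fun t : ℝ => z + t • u) :=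
    continuous_const.add (continuous_id.smul continuous_const)
  have hc : Filter.Tendsto (fun t : ℝ => z + t • u) (nhdsWithin 0 (Ioi 0)) (nhds z) := by
    have := (hc0.tendsto 0).mono_left (nhdsWithin_le_nhds (s := Ioi (0:ℝ)))
    simpa using this
  refine mem_closure_of_tendsto hc ?_
  have hIoo : Ioo (0:ℝ) (ε - τ z) ∈ nhdsWithin 0 (Ioi 0) :=
    Ioo_mem_nhdsGT_of_mem ⟨le_refl 0, by linarith [habs.1, habs.2]⟩
  filter_upwards [hIoo] with t ht
  have hτzt : |τ z + t| < ε := by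
    rw [abs_lt]; exact ⟨by linarith [habs.1, ht.1], by linarith [ht.1, ht.2]⟩
  refine ⟨⟨by rw [hπadd]; exact hz1, by rw [hτadd]; exact hτzt⟩, ?_⟩
  have := mono z 0 t ht.1 (fun s hs => by
    constructor
    · rw [hπadd]; exact hz1.le
    · rw [hτadd, abs_le]; exact ⟨by linarith [hs.1, habs.1], by linarith [hs.2, ht.2]⟩)
  simpa [hfz] using this

end StmtAux

private theorem aux_main {E : Type*} [NormedAddCommGroup E] [InnerProductSpace ℝ E]
    [CompleteSpace E]
    (A : Set E) (hA : IsClosed A) (x : E) (hx : x ∈ frontier (interior A))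
    (f : E → ℝ) (hcd : ContDiff ℝ 1 f) (hgrad : ∇ f x ≠ 0)
    (U : Set E) (hU : IsOpen U) (hxU : x ∈ U)
    (hfrontier : frontier A ∩ U ⊆ {y | f y = 0}) :
    ∃ V : Set E, IsOpen V ∧ x ∈ V ∧ V ⊆ U ∧
      frontier A ∩ V = {y ∈ V | f y = 0} ∧
      (A ∩ V = {y ∈ V | 0 ≤ f y} ∨ A ∩ V = {y ∈ V | f y ≤ 0}) := by
  have hfc : Continuous f := hcd.continuous
  have hxnotint : x ∉ interior A := by
    have := hx.2; rwa [interior_interior] at this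
  have hxclint : x ∈ closure (interior A) := hx.1
  have hxfr : x ∈ frontier A :=
    ⟨closure_mono interior_subset hxclint, hxnotint⟩
  have hfx : f x = 0 := hfrontier ⟨hxfr, hxU⟩
  -- the unit direction u
  obtain ⟨g, hg⟩ : ∃ g : E, g = ∇ f x := ⟨_, rfl⟩
  rw [← hg] at hgrad
  have hgn : (0:ℝ) < ‖g‖ := norm_pos_iff.2 hgrad
  obtain ⟨u, hu⟩ : ∃ u : E, u = ‖g‖⁻¹ • g := ⟨_, rfl⟩
  have hun : ‖u‖ = 1 := by
    rw [hu, norm_smul, norm_inv, norm_norm, inv_mul_cancel₀ (ne_of_gt hgn)]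
  -- positive directional derivative near x
  have hDc : Continuous (fun z => fderiv ℝ f z u) :=
    (ContinuousLinearMap.apply ℝ ℝ u).continuous.comp (hcd.continuous_fderiv one_ne_zero)
  have hDinner : ∀ z : E, fderiv ℝ f z u = ⟪∇ f z, u⟫ := by
    intro z
    have h := (hcd.differentiable one_ne_zero z).hasGradientAt
    rw [hasGradientAt_iff_hasFDerivAt] at h
    rw [h.fderiv, InnerProductSpace.toDual_apply_apply]
  have hDx : 0 < fderiv ℝ f x u := by
    rw [hDinner x, ← hg, hu, real_inner_smul_right, real_inner_self_eq_norm_mul_norm]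
    positivity
  have hWopen : IsOpen ({z : E | 0 < fderiv ℝ f z u} ∩ U) :=
    (isOpen_lt continuous_const hDc).inter hU
  obtain ⟨r', hr', hball⟩ := Metric.isOpen_iff.1 hWopen x ⟨hDx, hxU⟩
  obtain ⟨r, hrdef⟩ : ∃ r : ℝ, r = r' / 2 := ⟨_, rfl⟩
  have hr : 0 < r := by rw [hrdef]; positivity
  have hcb : closedBall x r ⊆ {z : E | 0 < fderiv ℝ f z u} ∩ U :=
    (Metric.closedBall_subset_ball (by rw [hrdef]; linarith)).trans hball
  -- monotonicity along u inside the ball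
  have mono : ∀ (z : E) (a b : ℝ), a < b →
      (∀ s ∈ Icc a b, z + s • u ∈ closedBall x r) → f (z + a • u) < f (z + b • u) :=
    fun z a b hab hin => mono_lemma f hcd u (closedBall x r) (fun w hw => (hcb hw).1)
      z a b hab hin
  -- scale constants
  obtain ⟨ε, hε⟩ : ∃ ε : ℝ, ε = r / 2 := ⟨_, rfl⟩
  have hεpos : 0 < ε := by rw [hε]; positivity
  have hεr : ε + ε ≤ r := by rw [hε]; linarith
  have axis_mem : ∀ s : ℝ, |s| ≤ r → x + s • u ∈ closedBall x r := by
    intro s hs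
    rw [mem_closedBall, dist_eq_norm]
    calc ‖x + s • u - x‖ = ‖s • u‖ := by congr 1; abel
    _ = |s| := by rw [norm_smul, hun, Real.norm_eq_abs, mul_one]
    _ ≤ r := hs
  have axis_pos : ∀ s : ℝ, 0 < s → s ≤ r → 0 < f (x + s • u) := by
    intro s h1 h2
    have := mono x 0 s h1 (fun t ht => axis_mem t (by
      rw [abs_le]; exact ⟨by linarith [ht.1], by linarith [ht.2]⟩))
    simpa [hfx] using this
  have axis_neg : ∀ s : ℝ, -r ≤ s → s < 0 → f (x + s • u) < 0 := by
    intro s h1 h2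
    have := mono x s 0 h2 (fun t ht => axis_mem t (by
      rw [abs_le]; exact ⟨by linarith [ht.1], by linarith [ht.2]⟩))
    simpa [hfx] using this
  -- thickened compact slabs of definite sign
  have hSc : Continuous (fun s : ℝ => x + s • u) :=
    continuous_const.add (continuous_id.smul continuous_const)
  have hSp : IsCompact ((fun s : ℝ => x + s • u) '' Icc (ε/2) ε) := isCompact_Icc.image hSc
  have hSm : IsCompact ((fun s : ℝ => x + s • u) '' Icc (-ε) (-(ε/2))) :=
    isCompact_Icc.image hSc
  have hSpsub : (fun s : ℝ => x + s • u) '' Icc (ε/2) ε ⊆ f ⁻¹' Ioi 0 := by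
    rintro _ ⟨s, hs, rfl⟩
    exact axis_pos s (by linarith [hs.1]) (by linarith [hs.2])
  have hSmsub : (fun s : ℝ => x + s • u) '' Icc (-ε) (-(ε/2)) ⊆ f ⁻¹' Iio 0 := by
    rintro _ ⟨s, hs, rfl⟩
    exact axis_neg s (by linarith [hs.1]) (by linarith [hs.2])
  obtain ⟨δp, hδp, hδpsub⟩ := hSp.exists_cthickening_subset_open (isOpen_Ioi.preimage hfc) hSpsub
  obtain ⟨δm, hδm, hδmsub⟩ := hSm.exists_cthickening_subset_open (isOpen_Iio.preimage hfc) hSmsub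
  obtain ⟨δ, hδdef⟩ : ∃ δ : ℝ, δ = min (min δp δm) ε := ⟨_, rfl⟩
  have hδpos : 0 < δ := by rw [hδdef]; exact lt_min (lt_min hδp hδm) hεpos
  have hδε : δ ≤ ε := by rw [hδdef]; exact min_le_right _ _
  have hδδp : δ ≤ δp := by rw [hδdef]; exact (min_le_left _ _).trans (min_le_left _ _)
  have hδδm : δ ≤ δm := by rw [hδdef]; exact (min_le_left _ _).trans (min_le_right _ _)
  have slab_pos : ∀ z : E, ‖projPerp x u z‖ ≤ δ → ε/2 ≤ projTau x u z → projTau x u z ≤ ε →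
      0 < f z := by
    intro z h1 h2 h3
    refine hδpsub (Metric.mem_cthickening_of_dist_le z (x + projTau x u z • u) _ _
      ⟨projTau x u z, ⟨h2, h3⟩, rfl⟩ ?_)
    rw [dist_axis_proj]
    exact h1.trans hδδp
  have slab_neg : ∀ z : E, ‖projPerp x u z‖ ≤ δ → -ε ≤ projTau x u z → projTau x u z ≤ -(ε/2) →
      f z < 0 := by
    intro z h1 h2 h3
    refine hδmsub (Metric.mem_cthickening_of_dist_le z (x + projTau x u z • u) _ _
      ⟨projTau x u z, ⟨h2, h3⟩, rfl⟩ ?_)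
    rw [dist_axis_proj]
    exact h1.trans hδδm
  have box_ball : ∀ z : E, ‖projPerp x u z‖ ≤ δ → |projTau x u z| ≤ ε → z ∈ closedBall x r := by
    intro z h1 h2
    rw [mem_closedBall, dist_eq_norm]
    have h3 := norm_sub_le_proj x u hun z
    linarith
  -- the box V
  obtain ⟨V, hVdef⟩ : ∃ V : Set E, V = {z : E | ‖projPerp x u z‖ < δ ∧ |projTau x u z| < ε} :=
    ⟨_, rfl⟩
  have hVmem : ∀ z : E, z ∈ V ↔ (‖projPerp x u z‖ < δ ∧ |projTau x u z| < ε) := by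
    intro z; rw [hVdef]; exact Iff.rfl
  have hVopen : IsOpen V := by
    rw [hVdef]
    exact (isOpen_lt (projPerp_continuous x u).norm continuous_const).inter
      (isOpen_lt (projTau_continuous x u).abs continuous_const)
  have hxV : x ∈ V := by
    rw [hVmem]
    constructor
    · rw [projPerp_self, norm_zero]; exact hδpos
    · rw [projTau_self, abs_zero]; exact hεpos
  have hVball : ∀ z ∈ V, z ∈ closedBall x r := by
    intro z hz
    rw [hVmem] at hz
    exact box_ball z hz.1.le hz.2.le
  have hVU : V ⊆ U := fun z hz => (hcb (hVball z hz)).2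
  -- box-form monotonicity
  have mono' : ∀ (z : E) (a b : ℝ), a < b →
      (∀ s ∈ Icc a b, ‖projPerp x u (z + s • u)‖ ≤ δ ∧ |projTau x u (z + s • u)| ≤ ε) →
      f (z + a • u) < f (z + b • u) :=
    fun z a b hab h => mono z a b hab (fun s hs => box_ball _ (h s hs).1 (h s hs).2)
  -- mirrored data for -f, -u
  have hun' : ‖-u‖ = 1 := by rw [norm_neg]; exact hun
  have mono'' : ∀ (z : E) (a b : ℝ), a < b →
      (∀ s ∈ Icc a b, ‖projPerp x (-u) (z + s • (-u))‖ ≤ δ ∧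
        |projTau x (-u) (z + s • (-u))| ≤ ε) →
      (fun w => -f w) (z + a • (-u)) < (fun w => -f w) (z + b • (-u)) := by
    intro z a b hab h
    have key : f (z + (-b) • u) < f (z + (-a) • u) := by
      refine mono' z (-b) (-a) (by linarith) ?_
      intro s hs
      have := h (-s) ⟨by linarith [hs.2], by linarith [hs.1]⟩
      rw [projPerp_neg, projTau_neg, abs_neg] at this
      have hrw : z + -s • -u = z + s • u := by
        rw [neg_smul, smul_neg, neg_neg]
      rwa [hrw] at this
    simp only [smul_neg, ← neg_smul]
    linarith
  have slab'' : ∀ z : E, ‖projPerp x (-u) z‖ ≤ δ → ε/2 ≤ projTau x (-u) z →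
      projTau x (-u) z ≤ ε → 0 < (fun w => -f w) z := by
    intro z h1 h2 h3
    rw [projPerp_neg] at h1
    rw [projTau_neg] at h2 h3
    have := slab_neg z h1 (by linarith) (by linarith)
    simpa using this
  -- the two pieces and their connectivity data
  have connp : ∀ y ∈ V, 0 < f y → ∃ C : Set E, IsPreconnected C ∧
      (∀ w ∈ C, w ∈ V ∧ 0 < f w) ∧ y ∈ C ∧ x + (3 * ε / 4) • u ∈ C := by
    intro y hy hfy
    rw [hVmem] at hy
    obtain ⟨C, h1, h2, h3, h4⟩ := conn_lemma f x u hun hεpos hδpos mono' slab_pos y hy.1 hy.2 hfy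
    exact ⟨C, h1, fun w hw => ⟨(hVmem w).2 (h2 w hw).1, (h2 w hw).2⟩, h3, h4⟩
  have connm : ∀ y ∈ V, f y < 0 → ∃ C : Set E, IsPreconnected C ∧
      (∀ w ∈ C, w ∈ V ∧ f w < 0) ∧ y ∈ C ∧ x + (-(3 * ε / 4)) • u ∈ C := by
    intro y hy hfy
    rw [hVmem] at hy
    have hy1 : ‖projPerp x (-u) y‖ < δ := by rw [projPerp_neg]; exact hy.1
    have hy2 : |projTau x (-u) y| < ε := by rw [projTau_neg, abs_neg]; exact hy.2
    obtain ⟨C, h1, h2, h3, h4⟩ := conn_lemma (fun w => -f w) x (-u) hun' hεpos hδpos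
      mono'' slab'' y hy1 hy2 (by simpa using hfy)
    refine ⟨C, h1, fun w hw => ?_, h3, ?_⟩
    · have := h2 w hw
      rw [projPerp_neg, projTau_neg, abs_neg] at this
      exact ⟨(hVmem w).2 ⟨this.1.1, this.1.2⟩, by linarith [this.2]⟩
    · rw [show x + (-(3 * ε / 4)) • u = x + (3 * ε / 4) • (-u) by rw [smul_neg, neg_smul]]
      exact h4
  -- zero points are in the closure of both pieces
  have clos_p : ∀ z ∈ V, f z = 0 → z ∈ closure {w : E | w ∈ V ∧ 0 < f w} := by
    intro z hz hfz
    rw [hVmem] at hz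
    have := clos_lemma f x u hun hεpos hδpos mono' z hz.1 hz.2 hfz
    refine closure_mono ?_ this
    intro w hw
    exact ⟨(hVmem w).2 hw.1, hw.2⟩
  have clos_m : ∀ z ∈ V, f z = 0 → z ∈ closure {w : E | w ∈ V ∧ f w < 0} := by
    intro z hz hfz
    rw [hVmem] at hz
    have hz1 : ‖projPerp x (-u) z‖ < δ := by rw [projPerp_neg]; exact hz.1
    have hz2 : |projTau x (-u) z| < ε := by rw [projTau_neg, abs_neg]; exact hz.2
    have := clos_lemma (fun w => -f w) x (-u) hun' hεpos hδpos mono'' z hz1 hz2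
      (by simpa using hfz)
    refine closure_mono ?_ this
    intro w hw
    have hw' := hw
    simp only [Set.mem_setOf_eq] at hw'
    rw [projPerp_neg, projTau_neg, abs_neg] at hw'
    exact ⟨(hVmem w).2 ⟨hw'.1.1, hw'.1.2⟩, by linarith [hw'.2]⟩
  -- reference points
  have hpV : x + (3 * ε / 4) • u ∈ V := by
    rw [hVmem, projPerp_add x u hun, projTau_add x u hun, projPerp_self, projTau_self,
      norm_zero]
    refine ⟨hδpos, ?_⟩
    rw [zero_add, abs_of_nonneg (by positivity)]
    linarith
  have hqV : x + (-(3 * ε / 4)) • u ∈ V := by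
    rw [hVmem, projPerp_add x u hun, projTau_add x u hun, projPerp_self, projTau_self,
      norm_zero]
    refine ⟨hδpos, ?_⟩
    rw [zero_add, abs_neg, abs_of_nonneg (by positivity)]
    linarith
  have hfp : 0 < f (x + (3 * ε / 4) • u) := axis_pos _ (by positivity) (by linarith)
  have hfq : f (x + (-(3 * ε / 4)) • u) < 0 := axis_neg _ (by linarith) (by linarith)
  -- trichotomy
  have trich : ∀ z ∈ V, f z ≠ 0 → z ∈ interior A ∪ Aᶜ := by
    intro z hz hfz
    by_cases hzA : z ∈ A
    · left
      by_contra hzi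
      refine hfz (hfrontier ⟨?_, hVU hz⟩)
      rw [hA.frontier_eq]
      exact ⟨hzA, hzi⟩
    · right; exact hzA
  have hdisj : Disjoint (interior A) Aᶜ := disjoint_compl_right.mono_left interior_subset
  -- each piece lies entirely in interior A or in Aᶜ
  have side_p : {w : E | w ∈ V ∧ 0 < f w} ⊆ interior A ∨ {w : E | w ∈ V ∧ 0 < f w} ⊆ Aᶜ := by
    rcases trich _ hpV (ne_of_gt hfp) with hp'|hp'
    · left
      intro y hy
      obtain ⟨C, hC, hCsub, hyC, hpC⟩ := connp y hy.1 hy.2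
      have hCU : C ⊆ interior A ∪ Aᶜ := fun w hw =>
        trich w (hCsub w hw).1 (ne_of_gt (hCsub w hw).2)
      exact (hC.subset_left_of_subset_union isOpen_interior hA.isOpen_compl hdisj hCU
        ⟨_, hpC, hp'⟩) hyC
    · right
      intro y hy
      obtain ⟨C, hC, hCsub, hyC, hpC⟩ := connp y hy.1 hy.2
      have hCU : C ⊆ Aᶜ ∪ interior A := fun w hw =>
        ((trich w (hCsub w hw).1 (ne_of_gt (hCsub w hw).2)).elim Or.inr Or.inl)
      exact (hC.subset_left_of_subset_union hA.isOpen_compl isOpen_interior hdisj.symm hCU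
        ⟨_, hpC, hp'⟩) hyC
  have side_m : {w : E | w ∈ V ∧ f w < 0} ⊆ interior A ∨ {w : E | w ∈ V ∧ f w < 0} ⊆ Aᶜ := by
    rcases trich _ hqV (ne_of_lt hfq) with hq'|hq'
    · left
      intro y hy
      obtain ⟨C, hC, hCsub, hyC, hqC⟩ := connm y hy.1 hy.2
      have hCU : C ⊆ interior A ∪ Aᶜ := fun w hw =>
        trich w (hCsub w hw).1 (ne_of_lt (hCsub w hw).2)
      exact (hC.subset_left_of_subset_union isOpen_interior hA.isOpen_compl hdisj hCU
        ⟨_, hqC, hq'⟩) hyC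
    · right
      intro y hy
      obtain ⟨C, hC, hCsub, hyC, hqC⟩ := connm y hy.1 hy.2
      have hCU : C ⊆ Aᶜ ∪ interior A := fun w hw =>
        ((trich w (hCsub w hw).1 (ne_of_lt (hCsub w hw).2)).elim Or.inr Or.inl)
      exact (hC.subset_left_of_subset_union hA.isOpen_compl isOpen_interior hdisj.symm hCU
        ⟨_, hqC, hq'⟩) hyC
  -- both pieces cannot be inside interior A
  have not_both_int : ¬({w : E | w ∈ V ∧ 0 < f w} ⊆ interior A ∧
      {w : E | w ∈ V ∧ f w < 0} ⊆ interior A) := by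
    rintro ⟨h1, h2⟩
    have hVsA : V ⊆ A := by
      intro z hz
      rcases lt_trichotomy (f z) 0 with h|h|h
      · exact interior_subset (h2 ⟨hz, h⟩)
      · have hcl := clos_p z hz h
        have : z ∈ closure (interior A) := closure_mono (fun w hw => h1 hw) hcl
        exact closure_minimal interior_subset hA this
      · exact interior_subset (h1 ⟨hz, h⟩)
    exact hxnotint ((hVopen.subset_interior_iff.2 hVsA) hxV)
  -- both pieces cannot be inside Aᶜ
  have not_both_c : ¬({w : E | w ∈ V ∧ 0 < f w} ⊆ Aᶜ ∧
      {w : E | w ∈ V ∧ f w < 0} ⊆ Aᶜ) := by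
    rintro ⟨h1, h2⟩
    obtain ⟨a, haV, haint⟩ : (V ∩ interior A).Nonempty := by
      rw [_root_.mem_closure_iff] at hxclint
      exact hxclint V hVopen hxV
    rcases lt_trichotomy (f a) 0 with h|h|h
    · exact (h2 ⟨haV, h⟩) (interior_subset haint)
    · have hcl := clos_p a haV h
      rw [_root_.mem_closure_iff] at hcl
      obtain ⟨w, hw1, hw2⟩ := hcl (interior A) isOpen_interior haint
      exact (h1 hw2) (interior_subset hw1)
    · exact (h1 ⟨haV, h⟩) (interior_subset haint)
  -- assembly
  have main_pos : {w : E | w ∈ V ∧ 0 < f w} ⊆ interior A →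
      {w : E | w ∈ V ∧ f w < 0} ⊆ Aᶜ →
      frontier A ∩ V = {y ∈ V | f y = 0} ∧ A ∩ V = {y ∈ V | 0 ≤ f y} := by
    intro hp1 hm1
    constructor
    · apply Subset.antisymm
      · rintro z ⟨hzf, hzV⟩
        exact ⟨hzV, hfrontier ⟨hzf, hVU hzV⟩⟩
      · rintro z ⟨hzV, hfz⟩
        refine ⟨?_, hzV⟩
        rw [frontier_eq_closure_inter_closure]
        constructor
        · exact closure_mono (fun w hw => interior_subset (hp1 hw)) (clos_p z hzV hfz)
        · exact closure_mono (fun w hw => hm1 hw) (clos_m z hzV hfz)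
    · apply Subset.antisymm
      · rintro z ⟨hzA, hzV⟩
        refine ⟨hzV, ?_⟩
        by_contra h
        push_neg at h
        exact (hm1 ⟨hzV, h⟩) hzA
      · rintro z ⟨hzV, hfz⟩
        refine ⟨?_, hzV⟩
        rcases hfz.lt_or_eq with h|h
        · exact interior_subset (hp1 ⟨hzV, h⟩)
        · have hcl := clos_p z hzV h.symm
          have : z ∈ closure (interior A) := closure_mono (fun w hw => hp1 hw) hcl
          exact closure_minimal interior_subset hA this
  have main_neg : {w : E | w ∈ V ∧ f w < 0} ⊆ interior A →
      {w : E | w ∈ V ∧ 0 < f w} ⊆ Aᶜ →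
      frontier A ∩ V = {y ∈ V | f y = 0} ∧ A ∩ V = {y ∈ V | f y ≤ 0} := by
    intro hm1 hp1
    constructor
    · apply Subset.antisymm
      · rintro z ⟨hzf, hzV⟩
        exact ⟨hzV, hfrontier ⟨hzf, hVU hzV⟩⟩
      · rintro z ⟨hzV, hfz⟩
        refine ⟨?_, hzV⟩
        rw [frontier_eq_closure_inter_closure]
        constructor
        · exact closure_mono (fun w hw => interior_subset (hm1 hw)) (clos_m z hzV hfz)
        · exact closure_mono (fun w hw => hp1 hw) (clos_p z hzV hfz)
    · apply Subset.antisymm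
      · rintro z ⟨hzA, hzV⟩
        refine ⟨hzV, ?_⟩
        by_contra h
        push_neg at h
        exact (hp1 ⟨hzV, h⟩) hzA
      · rintro z ⟨hzV, hfz⟩
        refine ⟨?_, hzV⟩
        rcases hfz.lt_or_eq with h|h
        · exact interior_subset (hm1 ⟨hzV, h⟩)
        · have hcl := clos_m z hzV h
          have : z ∈ closure (interior A) := closure_mono (fun w hw => hm1 hw) hcl
          exact closure_minimal interior_subset hA this
  rcases side_p with sp|sp <;> rcases side_m with sm|sm
  · exact absurd ⟨sp, sm⟩ not_both_int
  · obtain ⟨h1, h2⟩ := main_pos sp sm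
    exact ⟨V, hVopen, hxV, hVU, h1, Or.inl h2⟩
  · obtain ⟨h1, h2⟩ := main_neg sm sp
    exact ⟨V, hVopen, hxV, hVU, h1, Or.inr h2⟩
  · exact absurd ⟨sp, sm⟩ not_both_c


/-- If `A ⊆ ℝ^n` is closed, `x` lies in the frontier of the interior of `A`, `f` is a
polynomial function with `∇f(x) ≠ 0`, and `frontier A ∩ U ⊆ {f = 0}` for some open
neighborhood `U` of `x`, then there is an open `V` with `x ∈ V ⊆ U` such that
`frontier A ∩ V = {y ∈ V : f(y) = 0}` and, up to replacing `f` by `−f`,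
`A ∩ V = {y ∈ V : f(y) ≥ 0}`. -/
theorem stmt_10 {n : ℕ}
    (A : Set (EuclideanSpace ℝ (Fin n))) (hA : IsClosed A)
    (x : EuclideanSpace ℝ (Fin n)) (hx : x ∈ frontier (interior A))
    (P : MvPolynomial (Fin n) ℝ)
    (f : EuclideanSpace ℝ (Fin n) → ℝ)
    (hf : f = fun y => MvPolynomial.eval (fun i => y i) P)
    (hgrad : ∇ f x ≠ 0)
    (U : Set (EuclideanSpace ℝ (Fin n))) (hU : IsOpen U) (hxU : x ∈ U)
    (hfrontier : frontier A ∩ U ⊆ {y | f y = 0}) :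
    ∃ V : Set (EuclideanSpace ℝ (Fin n)), IsOpen V ∧ x ∈ V ∧ V ⊆ U ∧
      frontier A ∩ V = {y ∈ V | f y = 0} ∧
      (A ∩ V = {y ∈ V | 0 ≤ f y} ∨ A ∩ V = {y ∈ V | f y ≤ 0}) := by
  have hcd : ContDiff ℝ 1 f := by
    rw [hf]
    have h := AnalyticOnNhd.eval_continuousLinearMap
      ((PiLp.continuousLinearEquiv 2 ℝ (fun _ : Fin n => ℝ)).toContinuousLinearMap) P
    exact contDiff_iff_contDiffAt.2 fun z => ((h z trivial).contDiffAt).of_le le_top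
  exact aux_main A hA x hx f hcd hgrad U hU hxU hfrontier
end

section
/- Let H be a symmetric real (n+1)×(n+1) matrix and x ∈ ℝ^{n+1} such that Hx ≠ 0, ⟪x, Hx⟫ = 0, and ⟪v, Hv⟫ ≤ 0 for every v ∈ ℝ^{n+1} with ⟪Hx, v⟫ = 0. Then the set W = {v ∈ ℝ^{n+1} : ⟪Hx, v⟫ = 0 and ⟪v, Hv⟫ = 0} is a linear subspace, equal to (ker H) + span{x}; its dimension satisfies dim W = dim ker H + 1, and dim W + rank H = n + 2. -/
open Matrix

private lemma sym_dot {n : ℕ} {H : Matrix (Fin (n+1)) (Fin (n+1)) ℝ} (hH : H.IsSymm)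
    (u w : Fin (n+1) → ℝ) : u ⬝ᵥ H.mulVec w = w ⬝ᵥ H.mulVec u := by
  conv_lhs => rw [Matrix.dotProduct_mulVec, ← hH.eq, Matrix.vecMul_transpose]
  exact dotProduct_comm _ _

/-- Linear-algebraic core of the theorem after Renegar: if `H` is symmetric, `Hx ≠ 0`,
`⟪x, Hx⟫ = 0`, and `⟪v, Hv⟫ ≤ 0` for all `v ⊥ Hx`, then
`W = {v : ⟪Hx, v⟫ = 0, ⟪v, Hv⟫ = 0}` is the linear subspace `ker H + span{x}`, of dimension
`dim ker H + 1`, and `dim W + rank H = n + 2`. -/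
theorem stmt_11 {n : ℕ}
    (H : Matrix (Fin (n + 1)) (Fin (n + 1)) ℝ) (hH : H.IsSymm)
    (x : Fin (n + 1) → ℝ)
    (hHx : H.mulVec x ≠ 0)
    (hxHx : x ⬝ᵥ H.mulVec x = 0)
    (hneg : ∀ v : Fin (n + 1) → ℝ, H.mulVec x ⬝ᵥ v = 0 → v ⬝ᵥ H.mulVec v ≤ 0) :
    {v : Fin (n + 1) → ℝ | H.mulVec x ⬝ᵥ v = 0 ∧ v ⬝ᵥ H.mulVec v = 0} =
        ↑(LinearMap.ker H.mulVecLin ⊔ Submodule.span ℝ {x}) ∧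
      Module.finrank ℝ ↥(LinearMap.ker H.mulVecLin ⊔ Submodule.span ℝ {x}) =
        Module.finrank ℝ ↥(LinearMap.ker H.mulVecLin) + 1 ∧
      Module.finrank ℝ ↥(LinearMap.ker H.mulVecLin ⊔ Submodule.span ℝ {x}) + H.rank = n + 2 := by
  have hx0 : x ≠ 0 := by
    intro h; exact hHx (by rw [h, Matrix.mulVec_zero])
  have hxK : x ∉ LinearMap.ker H.mulVecLin := by
    simpa [LinearMap.mem_ker, Matrix.mulVecLin_apply] using hHx
  -- key: for v in W and w ⊥ Hx, v ⬝ᵥ H w = 0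
  have key : ∀ v w : Fin (n+1) → ℝ, H.mulVec x ⬝ᵥ v = 0 → v ⬝ᵥ H.mulVec v = 0 →
      H.mulVec x ⬝ᵥ w = 0 → v ⬝ᵥ H.mulVec w = 0 := by
    intro v w hv hvv hw
    set B := v ⬝ᵥ H.mulVec w with hB
    set C := w ⬝ᵥ H.mulVec w with hC
    have hCle : C ≤ 0 := hneg w hw
    have expand : ∀ t : ℝ, 2 * t * B + t^2 * C ≤ 0 := by
      intro t
      have h1 : H.mulVec x ⬝ᵥ (v + t • w) = 0 := by
        rw [dotProduct_add, hv, dotProduct_smul, hw, smul_zero, add_zero]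
      have h2 := hneg _ h1
      have h3 : (v + t • w) ⬝ᵥ H.mulVec (v + t • w)
          = v ⬝ᵥ H.mulVec v + (2 * t * B + t^2 * C) := by
        rw [Matrix.mulVec_add, Matrix.mulVec_smul]
        simp only [add_dotProduct, dotProduct_add, smul_dotProduct,
          dotProduct_smul, smul_eq_mul]
        rw [sym_dot hH w v, ← hB, ← hC]
        ring
      rw [h3, hvv, zero_add] at h2
      exact h2
    by_contra hBne
    have h1C : (0:ℝ) < 1 - C := by linarith
    have hne : (1 - C) ≠ 0 := ne_of_gt h1C
    set t : ℝ := B / (1 - C) with htdef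
    have hBeq : B = t * (1 - C) := (div_mul_cancel₀ B hne).symm
    have htne : t ≠ 0 := div_ne_zero hBne hne
    have ht2 : 0 < t^2 := by positivity
    have h := expand t
    rw [hBeq] at h
    nlinarith [mul_pos ht2 (show (0:ℝ) < 2 - C by linarith)]
  have hset : {v : Fin (n + 1) → ℝ | H.mulVec x ⬝ᵥ v = 0 ∧ v ⬝ᵥ H.mulVec v = 0} =
      ↑(LinearMap.ker H.mulVecLin ⊔ Submodule.span ℝ {x}) := by
    ext v
    simp only [Set.mem_setOf_eq, SetLike.mem_coe]
    constructor
    · rintro ⟨hv, hvv⟩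
      have hHxHx : H.mulVec x ⬝ᵥ H.mulVec x ≠ 0 := by
        rwa [Ne, dotProduct_self_eq_zero]
      set c : ℝ := (H.mulVec v ⬝ᵥ H.mulVec x) / (H.mulVec x ⬝ᵥ H.mulVec x) with hc
      set u : Fin (n+1) → ℝ := H.mulVec v - c • H.mulVec x with hu
      have hxu : H.mulVec x ⬝ᵥ u = 0 := by
        rw [hu, dotProduct_sub, dotProduct_smul, smul_eq_mul, hc,
          dotProduct_comm (H.mulVec x) (H.mulVec v)]
        field_simp
        simp
      have hvu : H.mulVec v ⬝ᵥ u = 0 := by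
        rw [dotProduct_comm, sym_dot hH u v]
        exact key v u hv hvv hxu
      have huu : u ⬝ᵥ u = 0 := by
        calc u ⬝ᵥ u = H.mulVec v ⬝ᵥ u - c * (H.mulVec x ⬝ᵥ u) := by
              rw [hu, sub_dotProduct, smul_dotProduct, smul_eq_mul]
          _ = 0 := by rw [hvu, hxu, mul_zero, sub_zero]
      have hu0 : u = 0 := by rwa [dotProduct_self_eq_zero] at huu
      have hHvc : H.mulVec v = c • H.mulVec x := by
        have := sub_eq_zero.mp (hu ▸ hu0)
        exact this
      have hker : v - c • x ∈ LinearMap.ker H.mulVecLin := by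
        rw [LinearMap.mem_ker, map_sub, LinearMap.map_smul]
        simp only [Matrix.mulVecLin_apply]
        rw [hHvc]; abel
      have : v = (v - c • x) + c • x := by abel
      rw [this]
      exact Submodule.add_mem_sup hker
        (Submodule.smul_mem _ c (Submodule.mem_span_singleton_self x))
    · intro hv
      obtain ⟨k, hk, s, hs, rfl⟩ := Submodule.mem_sup.mp hv
      obtain ⟨c, rfl⟩ := Submodule.mem_span_singleton.mp hs
      rw [LinearMap.mem_ker] at hk
      have hk' : H.mulVec k = 0 := hk
      have hHkx : H.mulVec (k + c • x) = c • H.mulVec x := by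
        rw [Matrix.mulVec_add, Matrix.mulVec_smul, hk', zero_add]
      have h1 : H.mulVec x ⬝ᵥ (k + c • x) = 0 := by
        rw [dotProduct_add, dotProduct_smul, smul_eq_mul]
        have hxk : H.mulVec x ⬝ᵥ k = 0 := by
          rw [dotProduct_comm, sym_dot hH k x, hk', dotProduct_zero]
        rw [hxk, dotProduct_comm (H.mulVec x) x, hxHx, mul_zero, add_zero]
      refine ⟨h1, ?_⟩
      rw [hHkx, dotProduct_smul, smul_eq_mul,
        dotProduct_comm _ (H.mulVec x), h1, mul_zero]
  have hinf : LinearMap.ker H.mulVecLin ⊓ Submodule.span ℝ {x} = ⊥ :=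
    ((Submodule.disjoint_span_singleton' hx0).mpr hxK).eq_bot
  have hdim : Module.finrank ℝ ↥(LinearMap.ker H.mulVecLin ⊔ Submodule.span ℝ {x}) =
      Module.finrank ℝ ↥(LinearMap.ker H.mulVecLin) + 1 := by
    have := Submodule.finrank_sup_add_finrank_inf_eq (LinearMap.ker H.mulVecLin)
      (Submodule.span ℝ {x})
    rw [hinf, finrank_bot, add_zero, finrank_span_singleton hx0] at this
    exact this
  refine ⟨hset, hdim, ?_⟩
  have hrank : H.rank + Module.finrank ℝ ↥(LinearMap.ker H.mulVecLin) = n + 1 := by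
    have := LinearMap.finrank_range_add_finrank_ker H.mulVecLin
    rw [Module.finrank_fin_fun] at this
    simpa [Matrix.rank] using this
  rw [hdim]
  omega
end

section
/- Let H be a symmetric real (n+1)×(n+1) matrix and x ∈ ℝ^{n+1} such that Hx ≠ 0, ⟪x, Hx⟫ = 0, and ⟪v, Hv⟫ ≤ 0 for every v ∈ ℝ^{n+1} with ⟪Hx, v⟫ = 0. Then the maximal dimension of a linear subspace of ℝ^{n+1} on which the quadratic form v ↦ ⟪v, Hv⟫ is positive definite equals 1 (i.e., H has exactly one positive eigenvalue, counted with multiplicity). -/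
open Matrix

/-- If `H` is symmetric, `Hx ≠ 0`, `⟪x, Hx⟫ = 0`, and `⟪v, Hv⟫ ≤ 0` for all `v ⊥ Hx`, then
the maximal dimension of a subspace on which `v ↦ ⟪v, Hv⟫` is positive definite equals `1`,
i.e. `H` has exactly one positive eigenvalue counted with multiplicity. -/
theorem stmt_12 {n : ℕ}
    (H : Matrix (Fin (n + 1)) (Fin (n + 1)) ℝ) (hH : H.IsSymm)
    (x : Fin (n + 1) → ℝ)
    (hHx : H.mulVec x ≠ 0)
    (hxHx : x ⬝ᵥ H.mulVec x = 0)
    (hneg : ∀ v : Fin (n + 1) → ℝ, H.mulVec x ⬝ᵥ v = 0 → v ⬝ᵥ H.mulVec v ≤ 0) :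
    IsGreatest {d : ℕ | ∃ V : Submodule ℝ (Fin (n + 1) → ℝ),
        Module.finrank ℝ ↥V = d ∧ ∀ v ∈ V, v ≠ 0 → 0 < v ⬝ᵥ H.mulVec v} 1 := by
  have hsym : ∀ a b : Fin (n + 1) → ℝ, a ⬝ᵥ H.mulVec b = H.mulVec a ⬝ᵥ b := by
    intro a b
    rw [Matrix.dotProduct_mulVec, ← Matrix.mulVec_transpose, hH.eq]
  constructor
  · -- membership: construct a vector with positive form value
    set u := H.mulVec x with hu
    have hs : 0 < u ⬝ᵥ u := by
      have hne : u ⬝ᵥ u ≠ 0 := fun h => hHx (dotProduct_self_eq_zero.mp h)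
      have hnn : 0 ≤ u ⬝ᵥ u := Finset.sum_nonneg fun i _ => mul_self_nonneg (u i)
      exact lt_of_le_of_ne hnn (Ne.symm hne)
    set s := u ⬝ᵥ u with hsdef
    set c := u ⬝ᵥ H.mulVec u with hcdef
    set t := s / (|c| + 1) with htdef
    have habs : 0 ≤ |c| := abs_nonneg c
    have ht : 0 < t := div_pos hs (by linarith)
    have hts : t * (|c| + 1) = s := by
      rw [htdef, div_mul_cancel₀ _ (by positivity : (|c| + 1) ≠ 0)]
    set v := x + t • u with hv
    have hq : v ⬝ᵥ H.mulVec v = 2 * t * s + t ^ 2 * c := by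
      have h1 : x ⬝ᵥ H.mulVec u = s := by rw [hsym]
      have h2 : u ⬝ᵥ H.mulVec x = s := rfl
      simp only [hv, Matrix.mulVec_add, Matrix.mulVec_smul, dotProduct_add,
        add_dotProduct, dotProduct_smul, smul_dotProduct, smul_eq_mul]
      rw [hxHx, h1, ← hcdef, ← hu, h2]
      ring
    have hqpos : 0 < v ⬝ᵥ H.mulVec v := by
      rw [hq]
      have hc1 : -|c| ≤ c := neg_abs_le c
      nlinarith [sq_nonneg t, mul_pos ht ht]
    have hvne : v ≠ 0 := by
      intro h
      rw [h] at hqpos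
      simp at hqpos
    refine ⟨Submodule.span ℝ {v}, finrank_span_singleton hvne, ?_⟩
    intro w hw hwne
    obtain ⟨a, rfl⟩ := Submodule.mem_span_singleton.mp hw
    have ha : a ≠ 0 := by
      rintro rfl; simp at hwne
    have : a • v ⬝ᵥ H.mulVec (a • v) = a ^ 2 * (v ⬝ᵥ H.mulVec v) := by
      simp only [Matrix.mulVec_smul, dotProduct_smul, smul_dotProduct, smul_eq_mul]
      ring
    rw [this]
    exact mul_pos (by positivity) hqpos
  · -- upper bound
    rintro d ⟨V, hV, hpos⟩
    by_contra hd
    push_neg at hd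
    have hd2 : 2 ≤ d := hd
    let f : (Fin (n + 1) → ℝ) →ₗ[ℝ] ℝ :=
      { toFun := fun w => H.mulVec x ⬝ᵥ w,
        map_add' := fun a b => dotProduct_add _ _ _,
        map_smul' := fun r a => by simp [dotProduct_smul] }
    let g := f.comp V.subtype
    have hrn : Module.finrank ℝ (LinearMap.range g) + Module.finrank ℝ (LinearMap.ker g)
        = Module.finrank ℝ V := LinearMap.finrank_range_add_finrank_ker g
    have hr1 : Module.finrank ℝ (LinearMap.range g) ≤ 1 := by
      have := Submodule.finrank_le (LinearMap.range g)
      simpa using this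
    have hker : 0 < Module.finrank ℝ (LinearMap.ker g) := by omega
    have : Nontrivial (LinearMap.ker g) := Module.finrank_pos_iff.mp hker
    obtain ⟨k, hk⟩ := exists_ne (0 : LinearMap.ker g)
    have hvV : ((k : V) : Fin (n + 1) → ℝ) ∈ V := (k : V).2
    have hvne : ((k : V) : Fin (n + 1) → ℝ) ≠ 0 := by
      simpa [Submodule.coe_eq_zero] using hk
    have hker0 : H.mulVec x ⬝ᵥ ((k : V) : Fin (n + 1) → ℝ) = 0 := k.2
    have h1 := hneg _ hker0
    have h2 := hpos _ hvV hvne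
    linarith
end
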